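/- arXiv:2108.00628 — 5 statements merged into one kernel-verified Lean document; each statement's English description precedes it below -/
import Mathlib

section
/- Let Y be a closed subspace of a Banach space X. If for every nonempty closed bounded subset F of X the set cent_{B_Y}(F) is nonempty (i.e., the pair (B_Y, CB(X)) has the restricted center property), then for every nonempty closed bounded subset F of X the set cent_Y(F) is also nonempty. -/
open Metric Set Pointwise

/-- `r(x,B) = sup_{b ∈ B} ‖x - b‖`. -/
noncomputable def chebR {X : Type*} [NormedAddCommGroup X] (x : X) (B : Set X) : ℝ :=
  ⨆ b : B, ‖x - (b : X)‖

/-- `rad_V(B) = inf_{v ∈ V} r(v,B)`, the restricted Chebyshev radius. -/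
noncomputable def chebRad {X : Type*} [NormedAddCommGroup X] (V B : Set X) : ℝ :=
  ⨅ v : V, chebR (v : X) B

/-- `cent_V(B)`, the set of restricted Chebyshev centers of `B` w.r.t. `V`. -/
noncomputable def chebCent {X : Type*} [NormedAddCommGroup X] (V B : Set X) : Set X :=
  {v ∈ V | chebR v B ≤ chebRad V B}

/-- `cent_V(B,δ) = {v ∈ V : r(v,B) ≤ rad_V(B) + δ}`. -/
noncomputable def chebCentA {X : Type*} [NormedAddCommGroup X] (V B : Set X) (δ : ℝ) : Set X :=
  {v ∈ V | chebR v B ≤ chebRad V B + δ}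

section Aux

variable {X : Type*} [NormedAddCommGroup X]

lemma chebR_nonneg' (x : X) (B : Set X) : 0 ≤ chebR x B :=
  Real.iSup_nonneg fun _ => norm_nonneg _

lemma chebR_bdd' (x : X) {B : Set X} (hB : Bornology.IsBounded B) :
    BddAbove (Set.range fun b : B => ‖x - (b : X)‖) := by
  obtain ⟨M, hM⟩ := isBounded_iff_forall_norm_le.mp hB
  refine ⟨‖x‖ + M, ?_⟩
  rintro _ ⟨b, rfl⟩
  exact (norm_sub_le _ _).trans (by have := hM b b.2; linarith)

lemma le_chebR' {x b : X} {B : Set X} (hB : Bornology.IsBounded B) (hb : b ∈ B) :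
    ‖x - b‖ ≤ chebR x B :=
  le_ciSup (chebR_bdd' x hB) ⟨b, hb⟩

lemma chebR_le' {x : X} {B : Set X} {c : ℝ} (h : ∀ b ∈ B, ‖x - b‖ ≤ c) (hc : 0 ≤ c) :
    chebR x B ≤ c :=
  Real.iSup_le (fun b => h b b.2) hc

lemma chebRad_le' {v : X} {V B : Set X} (hv : v ∈ V) : chebRad V B ≤ chebR v B := by
  unfold chebRad
  exact ciInf_le (f := fun w : V => chebR (w : X) B)
    ⟨(0 : ℝ), by rintro _ ⟨w, rfl⟩; exact chebR_nonneg' _ _⟩ ⟨v, hv⟩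

end Aux

/-- if `(B_Y, CB(X))` has the restricted center property then so does `(Y, CB(X))`. -/
theorem stmt_3 {X : Type*} [NormedAddCommGroup X] [NormedSpace ℝ X] [CompleteSpace X]
    (Y : Submodule ℝ X) (hYc : IsClosed (Y : Set X))
    (hrcp : ∀ F : Set X, F.Nonempty → IsClosed F → Bornology.IsBounded F →
      (chebCent ((Y : Set X) ∩ closedBall 0 1) F).Nonempty) :
    ∀ F : Set X, F.Nonempty → IsClosed F → Bornology.IsBounded F →
      (chebCent (Y : Set X) F).Nonempty := by
  intro F hFne hFc hFb
  obtain ⟨M, hM⟩ := isBounded_iff_forall_norm_le.mp hFb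
  obtain ⟨b₀, hb₀⟩ := hFne
  have hM0 : 0 ≤ M := le_trans (norm_nonneg b₀) (hM b₀ hb₀)
  set rY := chebRad (Y : Set X) F with hrYdef
  have hrY0 : 0 ≤ rY := Real.iInf_nonneg fun _ => chebR_nonneg' _ _
  set R : ℝ := rY + 1 + M with hRdef
  have hRpos : 0 < R := by positivity
  have hRne : R ≠ 0 := hRpos.ne'
  set F' : Set X := R⁻¹ • F with hF'def
  have hF'ne : F'.Nonempty := ⟨R⁻¹ • b₀, smul_mem_smul_set hb₀⟩
  have hF'c : IsClosed F' := hFc.smul_of_ne_zero (inv_ne_zero hRne)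
  have hF'b : Bornology.IsBounded F' := hFb.smul₀ R⁻¹
  obtain ⟨v, ⟨hvY, hv1⟩, hvc⟩ := hrcp F' hF'ne hF'c hF'b
  refine ⟨R • v, Y.smul_mem R hvY, ?_⟩
  have key : ∀ ε : ℝ, 0 < ε → ε ≤ 1 → chebR (R • v) F ≤ rY + ε := by
    intro ε hε hε1
    have hlt : chebRad (Y : Set X) F < rY + ε := lt_add_of_pos_right _ hε
    obtain ⟨⟨y, hyY⟩, hy⟩ := exists_lt_of_ciInf_lt hlt
    have hyF : chebR y F ≤ rY + ε := hy.le
    have hynorm : ‖y‖ ≤ R := by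
      have h1 : ‖y - b₀‖ ≤ chebR y F := le_chebR' hFb hb₀
      have h2 : ‖y‖ - ‖b₀‖ ≤ ‖y - b₀‖ := norm_sub_norm_le y b₀
      have h3 := hM b₀ hb₀
      rw [hRdef]; linarith
    have hv'mem : R⁻¹ • y ∈ (Y : Set X) ∩ closedBall 0 1 := by
      refine ⟨Y.smul_mem _ hyY, ?_⟩
      rw [mem_closedBall_zero_iff, norm_smul, Real.norm_eq_abs,
        abs_of_pos (inv_pos.mpr hRpos)]
      calc R⁻¹ * ‖y‖ ≤ R⁻¹ * R := by
            exact mul_le_mul_of_nonneg_left hynorm (inv_pos.mpr hRpos).le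
        _ = 1 := inv_mul_cancel₀ hRne
    have hrad' : chebRad ((Y : Set X) ∩ closedBall 0 1) F' ≤ R⁻¹ * (rY + ε) := by
      refine le_trans (chebRad_le' hv'mem) ?_
      refine chebR_le' ?_ (by positivity)
      rintro _ ⟨b, hb, rfl⟩
      rw [← smul_sub, norm_smul, Real.norm_eq_abs, abs_of_pos (inv_pos.mpr hRpos)]
      exact mul_le_mul_of_nonneg_left ((le_chebR' hFb hb).trans hyF)
        (inv_pos.mpr hRpos).le
    have h1 : chebR (R • v) F ≤ R * chebR v F' := by
      refine chebR_le' ?_ (mul_nonneg hRpos.le (chebR_nonneg' _ _))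
      intro b hb
      have hb' : R⁻¹ • b ∈ F' := smul_mem_smul_set hb
      have h2 : ‖v - R⁻¹ • b‖ ≤ chebR v F' := le_chebR' hF'b hb'
      calc ‖R • v - b‖ = ‖R • (v - R⁻¹ • b)‖ := by
            rw [smul_sub, smul_inv_smul₀ hRne]
        _ = R * ‖v - R⁻¹ • b‖ := by
            rw [norm_smul, Real.norm_eq_abs, abs_of_pos hRpos]
        _ ≤ R * chebR v F' := mul_le_mul_of_nonneg_left h2 hRpos.le
    calc chebR (R • v) F ≤ R * chebR v F' := h1
      _ ≤ R * (R⁻¹ * (rY + ε)) :=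
          mul_le_mul_of_nonneg_left (hvc.trans hrad') hRpos.le
      _ = rY + ε := by field_simp
  refine le_of_forall_pos_le_add fun ε hε => ?_
  calc chebR (R • v) F ≤ rY + min ε 1 := key _ (lt_min hε one_pos) (min_le_right _ _)
    _ ≤ rY + ε := by linarith [min_le_left ε 1]
end

section
/- Let V be a nonempty closed convex subset of a Banach space X and B a nonempty closed bounded subset of X with rad_V(B) > 0. Then for every ε > 0 and γ > 0 there exists δ > 0 such that cent_V(B, γ+δ) ⊆ cent_V(B, γ) + εB_X. Moreover, δ can be taken to be any positive number less than min{rad_V(B), εγ/(6·rad_V(B) + 4γ)}. -/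
open Metric Set Pointwise

/-- for every `ε, γ > 0` there is `δ > 0` with
`cent_V(B,γ+δ) ⊆ cent_V(B,γ) + εB_X`; moreover any
`0 < δ < min (rad_V B) (εγ/(6 rad_V B + 4γ))` works. -/
theorem stmt_6 {X : Type*} [NormedAddCommGroup X] [NormedSpace ℝ X] [CompleteSpace X]
    (V : Set X) (hVne : V.Nonempty) (hVcl : IsClosed V) (hVcx : Convex ℝ V)
    (B : Set X) (hBne : B.Nonempty) (hBcl : IsClosed B) (hBbd : Bornology.IsBounded B)
    (hrad : 0 < chebRad V B) :
    ∀ ε > (0 : ℝ), ∀ γ > (0 : ℝ),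
      (∃ δ > (0 : ℝ), chebCentA V B (γ + δ) ⊆ chebCentA V B γ + ε • closedBall (0 : X) 1) ∧
      ∀ δ : ℝ, 0 < δ →
        δ < min (chebRad V B) (ε * γ / (6 * chebRad V B + 4 * γ)) →
        chebCentA V B (γ + δ) ⊆ chebCentA V B γ + ε • closedBall (0 : X) 1 := by
  obtain ⟨C, hC⟩ := hBbd.exists_norm_le
  obtain ⟨b0, hb0⟩ := hBne
  haveI : Nonempty B := ⟨⟨b0, hb0⟩⟩
  haveI : Nonempty V := hVne.to_subtype
  set R := chebRad V B with hRdef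
  -- boundedness of the sup defining chebR
  have hbdd : ∀ x : X, BddAbove (Set.range fun b : B => ‖x - (b : X)‖) := fun x =>
    ⟨‖x‖ + C, by
      rintro _ ⟨b, rfl⟩
      exact (norm_sub_le _ _).trans (by have := hC b b.2; linarith)⟩
  have hRnn : ∀ x : X, (0 : ℝ) ≤ chebR x B := fun x =>
    le_ciSup_of_le (hbdd x) ⟨b0, hb0⟩ (norm_nonneg _)
  have hRle : ∀ v ∈ V, R ≤ chebR v B := fun v hv =>
    ciInf_le ⟨0, by rintro _ ⟨⟨w, hw⟩, rfl⟩; exact hRnn w⟩ (⟨v, hv⟩ : V)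
  have hsub : ∀ x y : X, ‖x - y‖ ≤ chebR x B + chebR y B := by
    intro x y
    have h1 : ‖x - b0‖ ≤ chebR x B := le_ciSup (hbdd x) (⟨b0, hb0⟩ : B)
    have h2 : ‖y - b0‖ ≤ chebR y B := le_ciSup (hbdd y) (⟨b0, hb0⟩ : B)
    have h3 : ‖x - y‖ ≤ ‖x - b0‖ + ‖y - b0‖ := by
      have := norm_sub_le (x - b0) (y - b0)
      simpa [sub_sub_sub_cancel_right] using this
    linarith
  have hconv : ∀ (t : ℝ) (x y : X), 0 ≤ t → t ≤ 1 →
      chebR ((1 - t) • x + t • y) B ≤ (1 - t) * chebR x B + t * chebR y B := by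
    intro t x y ht0 ht1
    refine ciSup_le fun b => ?_
    have heq : (1 - t) • x + t • y - (b : X) = (1 - t) • (x - b) + t • (y - b) := by
      module
    calc ‖(1 - t) • x + t • y - (b : X)‖
        = ‖(1 - t) • (x - (b : X)) + t • (y - (b : X))‖ := by rw [heq]
      _ ≤ ‖(1 - t) • (x - (b : X))‖ + ‖t • (y - (b : X))‖ := norm_add_le _ _
      _ = (1 - t) * ‖x - (b : X)‖ + t * ‖y - (b : X)‖ := by
          rw [norm_smul, norm_smul, Real.norm_eq_abs, Real.norm_eq_abs,
            abs_of_nonneg (by linarith), abs_of_nonneg ht0]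
      _ ≤ (1 - t) * chebR x B + t * chebR y B := by
          have hx := le_ciSup (hbdd x) b
          have hy := le_ciSup (hbdd y) b
          have : (1 - t) * ‖x - (b : X)‖ ≤ (1 - t) * chebR x B :=
            mul_le_mul_of_nonneg_left hx (by linarith)
          have : t * ‖y - (b : X)‖ ≤ t * chebR y B :=
            mul_le_mul_of_nonneg_left hy ht0
          linarith [mul_le_mul_of_nonneg_left hx (show (0:ℝ) ≤ 1 - t by linarith),
            mul_le_mul_of_nonneg_left hy ht0]
  intro ε hε γ hγ
  have hdenom : (0 : ℝ) < 6 * R + 4 * γ := by linarith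
  have key : ∀ δ : ℝ, 0 < δ →
      δ < min R (ε * γ / (6 * R + 4 * γ)) →
      chebCentA V B (γ + δ) ⊆ chebCentA V B γ + ε • closedBall (0 : X) 1 := by
    intro δ hδ hδmin x hx
    obtain ⟨hxV, hxr⟩ : x ∈ V ∧ chebR x B ≤ R + (γ + δ) := hx
    have hδR : δ < R := lt_of_lt_of_le hδmin (min_le_left _ _)
    have hδε : δ * (6 * R + 4 * γ) < ε * γ :=
      (lt_div_iff₀ hdenom).mp (lt_of_lt_of_le hδmin (min_le_right _ _))
    set δ' : ℝ := min δ γ / 2 with hδ'def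
    have hδ'pos : 0 < δ' := by positivity
    have hδ'δ : δ' < δ := by
      have : min δ γ ≤ δ := min_le_left _ _
      rw [hδ'def]; linarith
    have hδ'γ : δ' < γ := by
      have : min δ γ ≤ γ := min_le_right _ _
      rw [hδ'def]; linarith
    -- pick y ∈ V with chebR y B < R + δ'
    have hlt : chebRad V B < R + δ' := by rw [← hRdef]; linarith
    obtain ⟨⟨y, hyV⟩, hy⟩ := exists_lt_of_ciInf_lt hlt
    set t : ℝ := δ / (γ + δ - δ') with htdef
    have hden : (0 : ℝ) < γ + δ - δ' := by linarith
    have ht0 : 0 < t := div_pos hδ hden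
    have ht1 : t < 1 := (div_lt_one hden).mpr (by linarith)
    have htden : t * (γ + δ - δ') = δ := div_mul_cancel₀ _ hden.ne'
    set w : X := (1 - t) • x + t • y with hwdef
    have hwV : w ∈ V := hVcx hxV hyV (by linarith) ht0.le (by ring)
    have hwr : chebR w B ≤ R + γ := by
      have h1 := hconv t x y ht0.le ht1.le
      have h2 : (1 - t) * chebR x B ≤ (1 - t) * (R + (γ + δ)) :=
        mul_le_mul_of_nonneg_left hxr (by linarith)
      have h3 : t * chebR y B ≤ t * (R + δ') :=
        mul_le_mul_of_nonneg_left hy.le ht0.le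
      nlinarith [htden]
    have hdist : ‖x - w‖ ≤ ε := by
      have hxw : x - w = t • (x - y) := by rw [hwdef]; module
      have h1 : ‖x - w‖ = t * ‖x - y‖ := by
        rw [hxw, norm_smul, Real.norm_eq_abs, abs_of_pos ht0]
      have h2 : ‖x - y‖ ≤ (R + (γ + δ)) + (R + δ') := by
        have := hsub x y
        linarith
      have h3 : t * ‖x - y‖ ≤ t * ((R + (γ + δ)) + (R + δ')) :=
        mul_le_mul_of_nonneg_left h2 ht0.le
      have h4 : t * ((R + (γ + δ)) + (R + δ')) ≤ ε := by
        rw [htdef, div_mul_eq_mul_div, div_le_iff₀ hden]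
        nlinarith [mul_nonneg hδ.le (show (0:ℝ) ≤ R - δ by linarith),
          mul_nonneg hδ.le (show (0:ℝ) ≤ δ - δ' by linarith),
          mul_nonneg hε.le (show (0:ℝ) ≤ δ - δ' by linarith),
          mul_nonneg hδ.le hγ.le, mul_nonneg hδ.le hrad.le]
      linarith
    have hmem : x - w ∈ ε • closedBall (0 : X) 1 := by
      rw [_root_.smul_closedBall _ _ zero_le_one, smul_zero, mul_one, mem_closedBall_zero_iff]
      rwa [Real.norm_eq_abs, abs_of_pos hε]
    exact Set.mem_add.mpr ⟨w, ⟨hwV, hwr⟩, x - w, hmem, by abel⟩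
  refine ⟨⟨min R (ε * γ / (6 * R + 4 * γ)) / 2, ?_, key _ ?_ ?_⟩, key⟩
  · have : 0 < min R (ε * γ / (6 * R + 4 * γ)) :=
      lt_min hrad (div_pos (mul_pos hε hγ) hdenom)
    linarith
  · have : 0 < min R (ε * γ / (6 * R + 4 * γ)) :=
      lt_min hrad (div_pos (mul_pos hε hγ) hdenom)
    linarith
  · have : 0 < min R (ε * γ / (6 * R + 4 * γ)) :=
      lt_min hrad (div_pos (mul_pos hε hγ) hdenom)
    linarith
end

section
/- Let X be an L₁-predual space (X* isometric to some L₁(μ)) and J an M-ideal in X. Then (X, B_J, K(X)) has property-(P₁): for every nonempty compact F ⊆ X, cent_{B_J}(F) ≠ ∅, and for every ε > 0 and every x ∈ B_J with r(x,F) ≤ rad_{B_J}(F) + ε, there exists z ∈ cent_{B_J}(F) with ‖x − z‖ ≤ ε. -/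
open Metric Set Pointwise

open NormedSpace MeasureTheory in
/-- `X` is an `L₁`-predual: `X*` is isometrically isomorphic to some `L₁(μ)`. -/
def IsL1Predual (X : Type*) [NormedAddCommGroup X] [NormedSpace ℝ X] : Prop :=
  ∃ (Ω : Type) (_ : MeasurableSpace Ω) (μ : Measure Ω),
    Nonempty (StrongDual ℝ X ≃ₗᵢ[ℝ] Lp ℝ 1 μ)

open NormedSpace in
/-- `J` is an `M`-ideal in `X`: the annihilator `J⊥` is the range of an `L`-projection on `X*`. -/
def IsMIdeal {X : Type*} [NormedAddCommGroup X] [NormedSpace ℝ X] (J : Submodule ℝ X) : Prop :=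
  ∃ P : StrongDual ℝ X →L[ℝ] StrongDual ℝ X, (∀ φ, P (P φ) = P φ) ∧
    (∀ φ : StrongDual ℝ X, ‖φ‖ = ‖P φ‖ + ‖φ - P φ‖) ∧
    Set.range P = {f : StrongDual ℝ X | ∀ x ∈ J, f x = 0}

section Stmt12Aux

open MeasureTheory NormedSpace Pointwise Filter

set_option linter.unusedVariables false
set_option linter.unusedSectionVars false

namespace Stmt12

section RealDecomp

variable {ι : Type*} [Fintype ι]

noncomputable def Hf (x : ι → ℝ) (i j : ι) : ℝ :=
  (max (x i) 0 * max (-x j) 0 - max (x j) 0 * max (-x i) 0) / (∑ k, max (x k) 0)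

lemma pos_sub_neg (a : ℝ) : max a 0 - max (-a) 0 = a := by
  rcases le_total a 0 with h | h
  · rw [max_eq_right h, max_eq_left (by linarith)]; ring
  · rw [max_eq_left h, max_eq_right (by linarith)]; ring

lemma pos_add_neg (a : ℝ) : max a 0 + max (-a) 0 = |a| := by
  rcases le_total a 0 with h | h
  · rw [max_eq_right h, max_eq_left (by linarith), abs_of_nonpos h]; ring
  · rw [max_eq_left h, max_eq_right (by linarith), abs_of_nonneg h]; ring

lemma pos_mul_neg (a : ℝ) : max a 0 * max (-a) 0 = 0 := by
  rcases le_total a 0 with h | h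
  · rw [max_eq_right h]; ring
  · rw [max_eq_right (by linarith : -a ≤ 0)]; ring

lemma Hf_antisymm (x : ι → ℝ) (i j : ι) : Hf x j i = - Hf x i j := by
  simp only [Hf]; ring

lemma neg_sum_eq (x : ι → ℝ) (hx : ∑ k, x k = 0) :
    (∑ k, max (-x k) 0) = ∑ k, max (x k) 0 := by
  have : ∑ k, (max (x k) 0 - max (-x k) 0) = 0 := by
    simp only [pos_sub_neg]; exact hx
  rw [Finset.sum_sub_distrib] at this
  linarith

lemma Hf_sum (x : ι → ℝ) (hx : ∑ k, x k = 0) (i : ι) : ∑ j, Hf x i j = x i := by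
  by_cases h : (∑ k, max (x k) 0) = 0
  · have h1 : ∀ k ∈ Finset.univ, max (x k) 0 = 0 :=
      (Finset.sum_eq_zero_iff_of_nonneg (fun k _ => le_max_right _ _)).mp h
    have h2 : ∀ k ∈ Finset.univ, max (-x k) 0 = 0 :=
      (Finset.sum_eq_zero_iff_of_nonneg (fun k _ => le_max_right _ _)).mp
        (by rw [neg_sum_eq x hx]; exact h)
    have hxi : x i = 0 := by
      have := pos_sub_neg (x i)
      rw [h1 i (Finset.mem_univ i), h2 i (Finset.mem_univ i)] at this; linarith
    have hz : ∀ j, Hf x i j = 0 := by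
      intro j
      simp only [Hf, h1 i (Finset.mem_univ i), h1 j (Finset.mem_univ j)]
      simp
    simp only [hz, Finset.sum_const, smul_zero, hxi]
  · simp only [Hf]
    rw [← Finset.sum_div]
    have : ∑ j, (max (x i) 0 * max (-x j) 0 - max (x j) 0 * max (-x i) 0)
        = max (x i) 0 * (∑ j, max (-x j) 0) - (∑ j, max (x j) 0) * max (-x i) 0 := by
      rw [Finset.sum_sub_distrib, ← Finset.mul_sum, ← Finset.sum_mul]
    rw [this, neg_sum_eq x hx]
    rw [div_eq_iff h]
    linear_combination (∑ k, max (x k) 0) * pos_sub_neg (x i)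

lemma abs_sub_of_mul_zero {a b : ℝ} (ha : 0 ≤ a) (hb : 0 ≤ b) (h : a * b = 0) :
    |a - b| = a + b := by
  rcases mul_eq_zero.mp h with h | h <;> subst h <;> simp [abs_of_nonneg, abs_of_nonpos, ha, hb]

lemma Hf_abs_sum (x : ι → ℝ) (hx : ∑ k, x k = 0) (i : ι) : ∑ j, |Hf x i j| = |x i| := by
  by_cases h : (∑ k, max (x k) 0) = 0
  · have h1 : ∀ k ∈ Finset.univ, max (x k) 0 = 0 :=
      (Finset.sum_eq_zero_iff_of_nonneg (fun k _ => le_max_right _ _)).mp h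
    have h2 : ∀ k ∈ Finset.univ, max (-x k) 0 = 0 :=
      (Finset.sum_eq_zero_iff_of_nonneg (fun k _ => le_max_right _ _)).mp
        (by rw [neg_sum_eq x hx]; exact h)
    have hxi : x i = 0 := by
      have := pos_sub_neg (x i)
      rw [h1 i (Finset.mem_univ i), h2 i (Finset.mem_univ i)] at this; linarith
    have hz : ∀ j, Hf x i j = 0 := by
      intro j
      simp only [Hf, h1 i (Finset.mem_univ i), h1 j (Finset.mem_univ j)]
      simp
    simp only [hz, abs_zero, Finset.sum_const, smul_zero, hxi]
  · have hS : 0 < ∑ k, max (x k) 0 := by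
      rcases lt_or_eq_of_le (Finset.sum_nonneg (fun k _ => le_max_right (x k) 0)) with h' | h'
      · exact h'
      · exact absurd h'.symm h
    simp only [Hf]
    have habs : ∀ j, |(max (x i) 0 * max (-x j) 0 - max (x j) 0 * max (-x i) 0) / (∑ k, max (x k) 0)|
        = (max (x i) 0 * max (-x j) 0 + max (x j) 0 * max (-x i) 0) / (∑ k, max (x k) 0) := by
      intro j
      rw [abs_div, abs_of_pos hS, abs_sub_of_mul_zero]
      · positivity
      · positivity
      · have : max (x i) 0 * max (-x j) 0 * (max (x j) 0 * max (-x i) 0)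
            = (max (x i) 0 * max (-x i) 0) * (max (x j) 0 * max (-x j) 0) := by ring
        rw [this, pos_mul_neg, pos_mul_neg]; ring
    simp only [habs]
    rw [← Finset.sum_div]
    have : ∑ j, (max (x i) 0 * max (-x j) 0 + max (x j) 0 * max (-x i) 0)
        = max (x i) 0 * (∑ j, max (-x j) 0) + (∑ j, max (x j) 0) * max (-x i) 0 := by
      rw [Finset.sum_add_distrib, ← Finset.mul_sum, ← Finset.sum_mul]
    rw [this, neg_sum_eq x hx, div_eq_iff h]
    linear_combination (∑ k, max (x k) 0) * pos_add_neg (x i)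

lemma Hf_abs_le (x : ι → ℝ) (hx : ∑ k, x k = 0) (i j : ι) : |Hf x i j| ≤ |x i| := by
  rw [← Hf_abs_sum x hx i]
  exact Finset.single_le_sum (f := fun j => |Hf x i j|) (fun k _ => abs_nonneg _)
    (Finset.mem_univ j)

end RealDecomp

section LpDecomp

variable {ι : Type*} [Fintype ι]

variable {Ω : Type*} [MeasurableSpace Ω] {μ : Measure Ω}

lemma lp_coeFn_sum (g : ι → Lp ℝ 1 μ) (s : Finset ι) :
    ⇑(∑ i ∈ s, g i) =ᵐ[μ] fun ω => ∑ i ∈ s, (g i : Ω → ℝ) ω := by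
  classical
  induction s using Finset.induction_on with
  | empty => simp only [Finset.sum_empty]; exact Lp.coeFn_zero (E := ℝ) (p := 1) (μ := μ)
  | insert a s hns ih =>
    rw [Finset.sum_insert hns]
    filter_upwards [Lp.coeFn_add (g a) (∑ i ∈ s, g i), ih] with ω h1 h2
    rw [Finset.sum_insert hns, h1]
    simp only [Pi.add_apply, h2]

lemma decomp (g : ι → Lp ℝ 1 μ) (hg : ∑ i, g i = 0) :
    ∃ h : ι → ι → Lp ℝ 1 μ, (∀ i j, h j i = - h i j) ∧ (∀ i, ∑ j, h i j = g i) ∧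
      (∀ i, ∑ j, ‖h i j‖ ≤ ‖g i‖) := by
  classical
  set φ : ι → Ω → ℝ := fun i => (Lp.aestronglyMeasurable (g i)).mk _ with hφdef
  have hφm : ∀ i, Measurable (φ i) :=
    fun i => (Lp.aestronglyMeasurable (g i)).stronglyMeasurable_mk.measurable
  have hφ : ∀ i, ⇑(g i) =ᵐ[μ] φ i := fun i => (Lp.aestronglyMeasurable (g i)).ae_eq_mk
  have hgood : ∀ᵐ ω ∂μ, ∑ k, φ k ω = 0 := by
    have h0 : ⇑(∑ i, g i) =ᵐ[μ] fun _ => (0 : ℝ) := by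
      rw [hg]; exact Lp.coeFn_zero _ _ _
    have h1 := lp_coeFn_sum g Finset.univ
    have h2 : ∀ᵐ ω ∂μ, ∀ i, (g i : Ω → ℝ) ω = φ i ω := ae_all_iff.mpr hφ
    filter_upwards [h0, h1, h2] with ω e0 e1 e2
    rw [← Finset.sum_congr rfl (fun i _ => e2 i), ← e1, e0]
  set H : ι → ι → Ω → ℝ := fun i j ω => Hf (fun k => φ k ω) i j with hHdef
  have hHm : ∀ i j, Measurable (H i j) := by
    intro i j
    have hS : Measurable fun ω => ∑ k, max (φ k ω) 0 :=
      Finset.measurable_sum _ (fun k _ => (hφm k).max measurable_const)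
    simp only [hHdef, Hf]
    exact ((((hφm i).max measurable_const).mul (((hφm j).neg).max measurable_const)).sub
        (((hφm j).max measurable_const).mul (((hφm i).neg).max measurable_const))).div hS
  have hmem : ∀ i j, MemLp (H i j) 1 μ := by
    intro i j
    refine MemLp.of_le (Lp.memLp (g i)) (hHm i j).aestronglyMeasurable ?_
    filter_upwards [hgood, hφ i] with ω e1 e2
    rw [Real.norm_eq_abs, Real.norm_eq_abs, e2]
    exact Hf_abs_le (fun k => φ k ω) e1 i j
  refine ⟨fun i j => (hmem i j).toLp _, ?_, ?_, ?_⟩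
  · intro i j
    apply Lp.ext
    filter_upwards [(hmem j i).coeFn_toLp, (hmem i j).coeFn_toLp,
      Lp.coeFn_neg ((hmem i j).toLp _)] with ω e1 e2 e3
    rw [e1, e3, Pi.neg_apply, e2, hHdef]
    exact Hf_antisymm _ i j
  · intro i
    apply Lp.ext
    have hcs := lp_coeFn_sum (fun j => (hmem i j).toLp _) Finset.univ
    have hall : ∀ᵐ ω ∂μ, ∀ j, ((hmem i j).toLp _ : Ω → ℝ) ω = H i j ω :=
      ae_all_iff.mpr (fun j => (hmem i j).coeFn_toLp)
    filter_upwards [hcs, hall, hgood, hφ i] with ω e1 e2 e3 e4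
    rw [e1, e4]
    rw [Finset.sum_congr rfl (fun j _ => e2 j)]
    exact Hf_sum (fun k => φ k ω) e3 i
  · intro i
    have hnorm : ∀ j, ‖(hmem i j).toLp _‖ = ∫ ω, |H i j ω| ∂μ := by
      intro j
      rw [L1.norm_eq_integral_norm]
      refine integral_congr_ae ?_
      filter_upwards [(hmem i j).coeFn_toLp] with ω e
      rw [e, Real.norm_eq_abs]
    have hint : ∀ j, Integrable (fun ω => |H i j ω|) μ :=
      fun j => (memLp_one_iff_integrable.mp (hmem i j)).abs
    calc ∑ j, ‖(hmem i j).toLp _‖ = ∑ j, ∫ ω, |H i j ω| ∂μ := by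
          exact Finset.sum_congr rfl (fun j _ => hnorm j)
      _ = ∫ ω, ∑ j, |H i j ω| ∂μ := (integral_finset_sum _ (fun j _ => hint j)).symm
      _ = ∫ ω, |φ i ω| ∂μ := by
          refine integral_congr_ae ?_
          filter_upwards [hgood] with ω e
          exact Hf_abs_sum (fun k => φ k ω) e i
      _ = ∫ ω, ‖(g i : Ω → ℝ) ω‖ ∂μ := by
          refine integral_congr_ae ?_
          filter_upwards [hφ i] with ω e
          rw [e, Real.norm_eq_abs]
      _ = ‖g i‖ := (L1.norm_eq_integral_norm _).symm
      _ ≤ ‖g i‖ := le_rfl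
  
end LpDecomp

section Duality

lemma dualize {X : Type*} [NormedAddCommGroup X] [NormedSpace ℝ X]
    (J : Submodule ℝ X) {ι : Type*} [Fintype ι] (a : ι → X) (lam : ι → ℝ)
    (hlam : ∀ i, 0 ≤ lam i) :
    ∃ f : ι → StrongDual ℝ X, (∀ i, ‖f i‖ ≤ lam i) ∧ (∀ y ∈ J, ∑ i, f i y = 0) ∧
      ∀ c : ℝ, (∀ y ∈ J, c ≤ ∑ i, lam i * ‖y - a i‖) → c ≤ ∑ i, (f i) (a i) := by
  classical
  set Q : (ι → X) → Set ℝ := fun u => {r | ∃ y ∈ J, r = ∑ i, lam i * ‖u i - y‖} with hQdef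
  have hQne : ∀ u, (Q u).Nonempty := fun u => ⟨_, 0, J.zero_mem, rfl⟩
  have hQbdd : ∀ u, BddBelow (Q u) := by
    rintro u
    refine ⟨0, ?_⟩
    rintro r ⟨y, hy, rfl⟩
    exact Finset.sum_nonneg fun i _ => mul_nonneg (hlam i) (norm_nonneg _)
  set q : (ι → X) → ℝ := fun u => sInf (Q u) with hqdef
  have hq_nonneg : ∀ u, 0 ≤ q u := by
    intro u
    refine le_csInf (hQne u) ?_
    rintro r ⟨y, hy, rfl⟩
    exact Finset.sum_nonneg fun i _ => mul_nonneg (hlam i) (norm_nonneg _)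
  have hq_le : ∀ u, ∀ y ∈ J, q u ≤ ∑ i, lam i * ‖u i - y‖ := fun u y hy =>
    csInf_le (hQbdd u) ⟨y, hy, rfl⟩
  have hN_add : ∀ u v, q (u + v) ≤ q u + q v := by
    intro u v
    have key : ∀ p ∈ Q u, ∀ p' ∈ Q v, q (u + v) ≤ p + p' := by
      rintro _ ⟨y, hy, rfl⟩ _ ⟨z, hz, rfl⟩
      refine (hq_le (u + v) (y + z) (J.add_mem hy hz)).trans ?_
      rw [← Finset.sum_add_distrib]
      refine Finset.sum_le_sum fun i _ => ?_
      rw [← mul_add]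
      refine mul_le_mul_of_nonneg_left ?_ (hlam i)
      have : (u + v) i - (y + z) = (u i - y) + (v i - z) := by
        simp only [Pi.add_apply]; abel
      rw [this]
      exact norm_add_le _ _
    have step1 : ∀ p ∈ Q u, q (u + v) - p ≤ q v := by
      intro p hp
      refine le_csInf (hQne v) fun p' hp' => ?_
      have := key p hp p' hp'
      linarith
    have step2 : q (u + v) - q v ≤ q u := by
      refine le_csInf (hQne u) fun p hp => ?_
      have := step1 p hp
      linarith
    linarith
  have hN_hom : ∀ c : ℝ, 0 < c → ∀ u, q (c • u) = c * q u := by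
    intro c hc u
    have hset : Q (c • u) = (fun r => c * r) '' Q u := by
      ext r
      constructor
      · rintro ⟨y, hy, rfl⟩
        refine ⟨∑ i, lam i * ‖u i - c⁻¹ • y‖, ⟨c⁻¹ • y, J.smul_mem _ hy, rfl⟩, ?_⟩
        show c * (∑ i, lam i * ‖u i - c⁻¹ • y‖) = ∑ i, lam i * ‖(c • u) i - y‖
        rw [Finset.mul_sum]
        refine Finset.sum_congr rfl fun i _ => ?_
        have : (c • u) i - y = c • (u i - c⁻¹ • y) := by
          simp only [Pi.smul_apply, smul_sub, smul_smul, mul_inv_cancel₀ hc.ne', one_smul]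
        rw [this, norm_smul, Real.norm_eq_abs, abs_of_pos hc]
        ring
      · rintro ⟨_, ⟨y, hy, rfl⟩, rfl⟩
        refine ⟨c • y, J.smul_mem _ hy, ?_⟩
        show c * (∑ i, lam i * ‖u i - y‖) = ∑ i, lam i * ‖(c • u) i - c • y‖
        rw [Finset.mul_sum]
        refine Finset.sum_congr rfl fun i _ => ?_
        have : (c • u) i - c • y = c • (u i - y) := by
          simp only [Pi.smul_apply, smul_sub]
        rw [this, norm_smul, Real.norm_eq_abs, abs_of_pos hc]
        ring
    rw [hqdef]
    simp only
    rw [hset]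
    have : (fun r => c * r) '' Q u = c • Q u := by
      rw [Set.image_smul.symm]; rfl
    rw [this, Real.sInf_smul_of_nonneg hc.le, smul_eq_mul]
  have hq0 : q 0 = 0 := by
    refine le_antisymm ?_ (hq_nonneg 0)
    have := hq_le 0 0 J.zero_mem
    simpa using this
  set m : ℝ := q a with hmdef
  have hH : ∀ c : ℝ, c • a = 0 → c • m = 0 := by
    intro c hc
    by_cases h : c = 0
    · rw [h, zero_smul]
    · have ha : a = 0 := by
        have := congrArg (fun v => c⁻¹ • v) hc
        simpa [smul_smul, inv_mul_cancel₀ h] using this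
      rw [ha] at hmdef
      rw [hmdef, hq0, smul_zero]
  set pmap := LinearPMap.mkSpanSingleton' (σ := RingHom.id ℝ) a m hH with hpmap
  have hf : ∀ u : pmap.domain, pmap u ≤ q u := by
    rintro ⟨u, hu⟩
    obtain ⟨c, hc⟩ := Submodule.mem_span_singleton.mp hu
    have hval : pmap ⟨u, hu⟩ = c * m := by
      have h2 := LinearPMap.mkSpanSingleton'_apply (σ := RingHom.id ℝ) a m hH c (by rw [hc]; exact hu)
      have hu2 : (⟨u, hu⟩ : pmap.domain) = ⟨c • a, by rw [hc]; exact hu⟩ :=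
        Subtype.ext hc.symm
      rw [hu2]
      rw [hpmap] at *
      rw [h2]; rfl
    rw [hval]
    simp only
    rw [← hc]
    rcases lt_trichotomy c 0 with h | h | h
    · have hcalc : c • a = (-c) • (-a) := by rw [smul_neg, neg_smul, neg_neg]
      have hqneg : -m ≤ q (-a) := by
        have := hN_add a (-a)
        rw [add_neg_cancel, hq0] at this
        linarith
      rw [hcalc, hN_hom (-c) (by linarith) (-a)]
      nlinarith
    · rw [h, zero_smul, zero_mul, hq0]
    · rw [hN_hom c h a]
  obtain ⟨g, hg1, hg2⟩ := exists_extension_of_le_sublinear pmap q hN_hom hN_add hf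
  have hsingle_bound : ∀ i (x : X), g (Pi.single i x) ≤ lam i * ‖x‖ := by
    intro i x
    refine (hg2 _).trans ?_
    refine (hq_le _ 0 J.zero_mem).trans ?_
    rw [Finset.sum_eq_single i]
    · rw [Pi.single_eq_same, sub_zero]
    · intro j _ hj
      rw [Pi.single_eq_of_ne hj, sub_zero, norm_zero, mul_zero]
    · intro h; exact absurd (Finset.mem_univ i) h
  have habs : ∀ i (x : X), ‖g (Pi.single i x)‖ ≤ lam i * ‖x‖ := by
    intro i x
    rw [Real.norm_eq_abs, abs_le]
    constructor
    · have := hsingle_bound i (-x)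
      rw [Pi.single_neg, map_neg, norm_neg] at this
      linarith
    · exact hsingle_bound i x
  set f : ι → StrongDual ℝ X := fun i =>
    LinearMap.mkContinuous (g ∘ₗ LinearMap.single ℝ (fun _ => X) i) (lam i) (habs i) with hfdef
  have hfapp : ∀ i x, f i x = g (Pi.single i x) := fun i x => rfl
  have hsum : ∀ v : X, (∑ i, f i v) = g (fun _ => v) := by
    intro v
    rw [Finset.sum_congr rfl fun i (_ : i ∈ Finset.univ) => hfapp i v, ← map_sum]
    congr 1
    exact Finset.univ_sum_single (fun _ => v)
  refine ⟨f, ?_, ?_, ?_⟩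
  · intro i
    exact LinearMap.mkContinuous_norm_le _ (hlam i) _
  · intro y hy
    have h1 : g (fun _ => y) ≤ 0 := by
      refine (hg2 _).trans ?_
      refine (hq_le _ y hy).trans ?_
      simp
    have h2 : g (fun _ => -y) ≤ 0 := by
      refine (hg2 _).trans ?_
      refine (hq_le _ (-y) (J.neg_mem hy)).trans ?_
      simp
    have h3 : (fun _ : ι => -y) = -(fun _ : ι => y) := rfl
    rw [h3, map_neg] at h2
    rw [hsum]
    linarith
  · intro c hc
    have hsa : (∑ i, f i (a i)) = g a := by
      rw [Finset.sum_congr rfl fun i (_ : i ∈ Finset.univ) => hfapp i (a i), ← map_sum,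
        Finset.univ_sum_single]
    have hga : g a = m := by
      have h1 := hg1 ⟨a, Submodule.mem_span_singleton_self a⟩
      have h2 := LinearPMap.mkSpanSingleton'_apply_self (σ := RingHom.id ℝ) a m hH
        (Submodule.mem_span_singleton_self a)
      rw [h1]
      exact h2
    rw [hsa, hga, hmdef]
    refine le_csInf (hQne a) ?_
    rintro r ⟨y, hy, rfl⟩
    refine (hc y hy).trans ?_
    refine Finset.sum_le_sum fun i _ => ?_
    rw [norm_sub_rev]

end Duality

section RAIsec

/-- The key estimate coming from the `L₁` structure of the dual and the `L`-projection. -/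
lemma l1_estimate {X : Type*} [NormedAddCommGroup X] [NormedSpace ℝ X]
    (hX : IsL1Predual X) {J : Submodule ℝ X} (hJ : IsMIdeal J)
    {ι : Type*} [Fintype ι] (a b : ι → X) (ρ : ι → ℝ)
    (hρ : ∀ i, 0 ≤ ρ i) (hpair : ∀ i j, ‖a i - a j‖ ≤ ρ i + ρ j)
    (hbJ : ∀ i, b i ∈ J) (hab : ∀ i, ‖a i - b i‖ ≤ ρ i)
    (f : ι → StrongDual ℝ X) (hfJ : ∀ y ∈ J, ∑ i, f i y = 0) :
    ∑ i, (f i) (a i) ≤ ∑ i, ρ i * ‖f i‖ := by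
  classical
  obtain ⟨Ω, mΩ, μ, ⟨T⟩⟩ := hX
  obtain ⟨P, hP2, hPL, hPran⟩ := hJ
  have hPzero : ∀ (φ : StrongDual ℝ X), ∀ y ∈ J, (P φ) y = 0 := by
    intro φ y hy
    have : P φ ∈ Set.range P := ⟨φ, rfl⟩
    rw [hPran] at this
    exact this y hy
  have hsmem : (∑ i, f i) ∈ Set.range P := by
    rw [hPran]
    intro y hy
    rw [ContinuousLinearMap.sum_apply]
    exact hfJ y hy
  have hPsum : P (∑ i, f i) = ∑ i, f i := by
    obtain ⟨φ, hφ⟩ := hsmem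
    rw [← hφ, hP2]
  set q : ι → Lp ℝ 1 μ := fun i => T (f i - P (f i)) with hqdef
  have hqsum : ∑ i, q i = 0 := by
    rw [hqdef]
    simp only
    rw [← map_sum]
    have : (∑ i, (f i - P (f i))) = ∑ i, f i - P (∑ i, f i) := by
      rw [map_sum]
      exact Finset.sum_sub_distrib _ _
    rw [this, hPsum, sub_self, map_zero]
  obtain ⟨h, hanti, hsum, hnorm⟩ := decomp q hqsum
  set k : ι → ι → StrongDual ℝ X := fun i j => T.symm (h i j) with hkdef
  have hksum : ∀ i, ∑ j, k i j = f i - P (f i) := by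
    intro i
    rw [hkdef]
    simp only
    rw [← map_sum, hsum i, hqdef]
    simp only
    rw [LinearIsometryEquiv.symm_apply_apply]
  have hknorm : ∀ i j, ‖k i j‖ = ‖h i j‖ := fun i j => LinearIsometryEquiv.norm_map _ _
  have hkanti : ∀ i j, k j i = - k i j := by
    intro i j
    rw [hkdef]
    simp only
    rw [hanti i j, map_neg]
  -- the antisymmetric part estimate
  have hA : (∑ i, ∑ j, (k i j) (a i)) ≤ ∑ i, ρ i * ‖f i - P (f i)‖ := by
    have swap : (∑ i, ∑ j, (k i j) (a i)) = - ∑ i, ∑ j, (k i j) (a j) := by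
      rw [Finset.sum_comm]
      rw [← Finset.sum_neg_distrib]
      refine Finset.sum_congr rfl fun j _ => ?_
      rw [← Finset.sum_neg_distrib]
      refine Finset.sum_congr rfl fun i _ => ?_
      rw [hkanti i j]
      simp
    have twoA : (2 : ℝ) * (∑ i, ∑ j, (k i j) (a i)) = ∑ i, ∑ j, (k i j) (a i - a j) := by
      have : (∑ i, ∑ j, (k i j) (a i - a j))
          = (∑ i, ∑ j, (k i j) (a i)) - ∑ i, ∑ j, (k i j) (a j) := by
        rw [← Finset.sum_sub_distrib]
        refine Finset.sum_congr rfl fun i _ => ?_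
        rw [← Finset.sum_sub_distrib]
        refine Finset.sum_congr rfl fun j _ => ?_
        rw [map_sub]
      rw [this]
      linarith [swap]
    have bound : (∑ i, ∑ j, (k i j) (a i - a j)) ≤ ∑ i, ∑ j, ‖h i j‖ * (ρ i + ρ j) := by
      refine Finset.sum_le_sum fun i _ => Finset.sum_le_sum fun j _ => ?_
      calc (k i j) (a i - a j) ≤ ‖k i j‖ * ‖a i - a j‖ :=
            le_trans (le_abs_self _) ((k i j).le_opNorm _)
        _ ≤ ‖h i j‖ * (ρ i + ρ j) := by
            rw [hknorm]
            exact mul_le_mul_of_nonneg_left (hpair i j) (norm_nonneg _)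
    have split : (∑ i, ∑ j, ‖h i j‖ * (ρ i + ρ j))
        = (∑ i, ∑ j, ‖h i j‖ * ρ i) + ∑ i, ∑ j, ‖h i j‖ * ρ j := by
      rw [← Finset.sum_add_distrib]
      refine Finset.sum_congr rfl fun i _ => ?_
      rw [← Finset.sum_add_distrib]
      refine Finset.sum_congr rfl fun j _ => ?_
      ring
    have hb1 : (∑ i, ∑ j, ‖h i j‖ * ρ i) ≤ ∑ i, ρ i * ‖f i - P (f i)‖ := by
      refine Finset.sum_le_sum fun i _ => ?_
      rw [← Finset.sum_mul]
      have h1 : (∑ j, ‖h i j‖) ≤ ‖q i‖ := hnorm i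
      have h2 : ‖q i‖ = ‖f i - P (f i)‖ := LinearIsometryEquiv.norm_map _ _
      calc (∑ j, ‖h i j‖) * ρ i ≤ ‖q i‖ * ρ i :=
            mul_le_mul_of_nonneg_right h1 (hρ i)
        _ = ρ i * ‖f i - P (f i)‖ := by rw [h2]; ring
    have hb2 : (∑ i, ∑ j, ‖h i j‖ * ρ j) ≤ ∑ i, ρ i * ‖f i - P (f i)‖ := by
      rw [Finset.sum_comm]
      refine Finset.sum_le_sum fun j _ => ?_
      rw [← Finset.sum_mul]
      have hsw : ∀ i, ‖h i j‖ = ‖h j i‖ := by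
        intro i
        rw [hanti j i, norm_neg]
      have h1 : (∑ i, ‖h i j‖) ≤ ‖q j‖ := by
        rw [Finset.sum_congr rfl fun i (_ : i ∈ Finset.univ) => hsw i]
        exact hnorm j
      have h2 : ‖q j‖ = ‖f j - P (f j)‖ := LinearIsometryEquiv.norm_map _ _
      calc (∑ i, ‖h i j‖) * ρ j ≤ ‖q j‖ * ρ j :=
            mul_le_mul_of_nonneg_right h1 (hρ j)
        _ = ρ j * ‖f j - P (f j)‖ := by rw [h2]; ring
    have final := le_trans bound (le_of_eq split)
    have final2 := le_trans final (add_le_add hb1 hb2)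
    rw [← twoA] at final2
    linarith
  -- combine with the P-part
  have hdec : ∀ i, (f i) (a i) = (P (f i)) (a i - b i) + ∑ j, (k i j) (a i) := by
    intro i
    have h1 : (∑ j, (k i j) (a i)) = (f i - P (f i)) (a i) := by
      rw [← ContinuousLinearMap.sum_apply, hksum i]
    rw [h1, map_sub, ContinuousLinearMap.sub_apply]
    have h2 : (P (f i)) (b i) = 0 := hPzero (f i) (b i) (hbJ i)
    rw [h2]
    ring
  have hB : (∑ i, (P (f i)) (a i - b i)) ≤ ∑ i, ρ i * ‖P (f i)‖ := by
    refine Finset.sum_le_sum fun i _ => ?_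
    calc (P (f i)) (a i - b i) ≤ ‖P (f i)‖ * ‖a i - b i‖ :=
          le_trans (le_abs_self _) ((P (f i)).le_opNorm _)
      _ ≤ ‖P (f i)‖ * ρ i := mul_le_mul_of_nonneg_left (hab i) (norm_nonneg _)
      _ = ρ i * ‖P (f i)‖ := by ring
  calc (∑ i, (f i) (a i)) = (∑ i, (P (f i)) (a i - b i)) + ∑ i, ∑ j, (k i j) (a i) := by
        rw [← Finset.sum_add_distrib]
        exact Finset.sum_congr rfl fun i _ => hdec i
    _ ≤ (∑ i, ρ i * ‖P (f i)‖) + ∑ i, ρ i * ‖f i - P (f i)‖ := add_le_add hB hA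
    _ = ∑ i, ρ i * ‖f i‖ := by
        rw [← Finset.sum_add_distrib]
        refine Finset.sum_congr rfl fun i _ => ?_
        rw [hPL (f i)]
        ring

/-- Relative almost-intersection of balls: pairwise intersecting balls each meeting the
`M`-ideal `J` admit a common point in `J` after `ε`-enlargement. -/
lemma RAI {X : Type*} [NormedAddCommGroup X] [NormedSpace ℝ X]
    (hX : IsL1Predual X) {J : Submodule ℝ X} (hJ : IsMIdeal J)
    {ι : Type*} [Fintype ι] (a b : ι → X) (ρ : ι → ℝ)
    (hρ : ∀ i, 0 ≤ ρ i) (hpair : ∀ i j, ‖a i - a j‖ ≤ ρ i + ρ j)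
    (hbJ : ∀ i, b i ∈ J) (hab : ∀ i, ‖a i - b i‖ ≤ ρ i)
    {ε : ℝ} (hε : 0 < ε) :
    ∃ y ∈ J, ∀ i, ‖y - a i‖ ≤ ρ i + ε := by
  classical
  set C : Set (ι → ℝ) := {c | ∃ y ∈ J, ∀ i, ‖y - a i‖ ≤ c i} with hCdef
  by_cases hmem : (fun i => ρ i + ε / 2) ∈ closure C
  · obtain ⟨c, hcC, hdist⟩ := Metric.mem_closure_iff.mp hmem (ε / 2) (by positivity)
    obtain ⟨y, hy, hyc⟩ := hcC
    refine ⟨y, hy, fun i => ?_⟩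
    have hd : dist ((fun i => ρ i + ε / 2) i) (c i) ≤ dist (fun i => ρ i + ε / 2) c :=
      dist_le_pi_dist (fun i => ρ i + ε / 2) c i
    rw [Real.dist_eq] at hd
    have : |ρ i + ε / 2 - c i| < ε / 2 := lt_of_le_of_lt hd hdist
    have h2 : c i ≤ ρ i + ε := by
      rcases abs_lt.mp this with ⟨h3, _⟩
      linarith
    exact (hyc i).trans h2
  · exfalso
    have hCconv : Convex ℝ C := by
      rintro c ⟨y, hy, hyc⟩ c' ⟨y', hy', hyc'⟩ s t hs ht hst
      refine ⟨s • y + t • y', J.add_mem (J.smul_mem _ hy) (J.smul_mem _ hy'), fun i => ?_⟩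
      have haid : s • (a i) + t • (a i) = a i := by
        rw [← add_smul, hst, one_smul]
      have : s • y + t • y' - a i = s • (y - a i) + t • (y' - a i) := by
        rw [smul_sub, smul_sub]
        conv_lhs => rw [← haid]
        abel
      rw [this]
      calc ‖s • (y - a i) + t • (y' - a i)‖ ≤ ‖s • (y - a i)‖ + ‖t • (y' - a i)‖ :=
            norm_add_le _ _
        _ = s * ‖y - a i‖ + t * ‖y' - a i‖ := by
            rw [norm_smul, norm_smul, Real.norm_eq_abs, Real.norm_eq_abs,
              abs_of_nonneg hs, abs_of_nonneg ht]
        _ ≤ s * c i + t * c' i :=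
            add_le_add (mul_le_mul_of_nonneg_left (hyc i) hs)
              (mul_le_mul_of_nonneg_left (hyc' i) ht)
        _ = (s • c + t • c') i := by simp [smul_eq_mul]
    obtain ⟨g, u, hgu, hgx⟩ :=
      geometric_hahn_banach_closed_point (hCconv.closure) isClosed_closure hmem
    set lam : ι → ℝ := fun i => - g (Pi.single i 1) with hlamdef
    have hgexp : ∀ c : ι → ℝ, g c = ∑ i, c i * g (Pi.single i 1) := by
      intro c
      have hrep : c = ∑ i, c i • (Pi.single i (1 : ℝ) : ι → ℝ) := by
        rw [show (∑ i, c i • (Pi.single i (1 : ℝ) : ι → ℝ)) = ∑ i, Pi.single i (c i) by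
          refine Finset.sum_congr rfl fun i _ => ?_
          rw [← Pi.single_smul, smul_eq_mul, mul_one]]
        exact (Finset.univ_sum_single c).symm
      conv_lhs => rw [hrep]
      rw [map_sum]
      refine Finset.sum_congr rfl fun i _ => ?_
      rw [_root_.map_smul, smul_eq_mul]
    have hupward : ∀ c ∈ C, ∀ (i : ι), ∀ t : ℝ, 0 ≤ t →
        c + t • (Pi.single i 1 : ι → ℝ) ∈ C := by
      rintro c ⟨y, hy, hyc⟩ i t ht
      refine ⟨y, hy, fun j => ?_⟩
      by_cases hij : j = i
      · subst hij
        simp only [Pi.add_apply, Pi.smul_apply, Pi.single_eq_same, smul_eq_mul, mul_one]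
        exact (hyc j).trans (by linarith)
      · simp only [Pi.add_apply, Pi.smul_apply, Pi.single_eq_of_ne hij, smul_eq_mul, mul_zero,
          add_zero]
        exact hyc j
    have hlam_nonneg : ∀ i, 0 ≤ lam i := by
      intro i
      rw [hlamdef]
      simp only [neg_nonneg]
      by_contra hpos
      push_neg at hpos
      obtain ⟨c0, hc0⟩ : C.Nonempty := ⟨fun i => ‖(0 : X) - a i‖, 0, J.zero_mem, fun i => le_rfl⟩
      have h1 : g c0 < u := hgu c0 (subset_closure hc0)
      have hgpos : 0 < g (Pi.single i 1) := hpos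
      have htpos : (0 : ℝ) ≤ (u - g c0) / g (Pi.single i 1) + 1 := by
        have := div_pos (by linarith : (0:ℝ) < u - g c0) hgpos
        linarith
      have key := hgu _ (subset_closure (hupward c0 hc0 i
        ((u - g c0) / g (Pi.single i 1) + 1) htpos))
      rw [map_add, _root_.map_smul, smul_eq_mul] at key
      have hexp : ((u - g c0) / g (Pi.single i 1) + 1) * g (Pi.single i 1)
          = u - g c0 + g (Pi.single i 1) := by
        field_simp
      rw [hexp] at key
      linarith
    -- primal lower bound and point value
    have hprimal : ∀ y ∈ J, -u ≤ ∑ i, lam i * ‖y - a i‖ := by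
      intro y hy
      have hcy : (fun i => ‖y - a i‖) ∈ C := ⟨y, hy, fun i => le_rfl⟩
      have := hgu _ (subset_closure hcy)
      rw [hgexp] at this
      have hexp : (∑ i, ‖y - a i‖ * g (Pi.single i 1)) = - ∑ i, lam i * ‖y - a i‖ := by
        rw [← Finset.sum_neg_distrib]
        refine Finset.sum_congr rfl fun i _ => ?_
        rw [hlamdef]
        ring
      rw [hexp] at this
      linarith
    have hpoint : (∑ i, lam i * (ρ i + ε / 2)) < -u := by
      have := hgx
      rw [hgexp] at this
      have hexp : (∑ i, (ρ i + ε / 2) * g (Pi.single i 1)) = - ∑ i, lam i * (ρ i + ε / 2) := by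
        rw [← Finset.sum_neg_distrib]
        refine Finset.sum_congr rfl fun i _ => ?_
        rw [hlamdef]
        ring
      rw [hexp] at this
      linarith
    obtain ⟨f, hf1, hf2, hf3⟩ := dualize J a lam hlam_nonneg
    have hdual : -u ≤ ∑ i, (f i) (a i) := hf3 (-u) hprimal
    have hest := l1_estimate hX hJ a b ρ hρ hpair hbJ hab f hf2
    have hchain : (∑ i, ρ i * ‖f i‖) ≤ ∑ i, lam i * ρ i := by
      refine Finset.sum_le_sum fun i _ => ?_
      rw [mul_comm]
      exact mul_le_mul_of_nonneg_right (hf1 i) (hρ i)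
    have hchain2 : (∑ i, lam i * ρ i) ≤ ∑ i, lam i * (ρ i + ε / 2) := by
      refine Finset.sum_le_sum fun i _ => ?_
      refine mul_le_mul_of_nonneg_left (by linarith) (hlam_nonneg i)
    linarith

end RAIsec

section Cheb

variable {X : Type*} [NormedAddCommGroup X] {F : Set X}

lemma cheb_bdd (hFne : F.Nonempty) (hFc : IsCompact F) (v : X) :
    BddAbove (Set.range fun b : F => ‖v - (b : X)‖) := by
  obtain ⟨R, hR⟩ := isBounded_iff_forall_norm_le.mp hFc.isBounded
  refine ⟨‖v‖ + R, ?_⟩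
  rintro _ ⟨b, rfl⟩
  calc ‖v - (b : X)‖ ≤ ‖v‖ + ‖(b : X)‖ := norm_sub_le _ _
    _ ≤ ‖v‖ + R := by have := hR b b.2; linarith

lemma le_chebR (hFne : F.Nonempty) (hFc : IsCompact F) (v : X) {f : X} (hf : f ∈ F) :
    ‖v - f‖ ≤ chebR v F :=
  le_ciSup (cheb_bdd hFne hFc v) (⟨f, hf⟩ : F)

lemma chebR_le (hFne : F.Nonempty) {v : X} {c : ℝ} (h : ∀ f ∈ F, ‖v - f‖ ≤ c) :
    chebR v F ≤ c := by
  haveI := hFne.to_subtype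
  exact ciSup_le fun b => h b b.2

lemma chebR_nonneg (hFne : F.Nonempty) (hFc : IsCompact F) (v : X) : 0 ≤ chebR v F := by
  obtain ⟨f, hf⟩ := hFne
  exact (norm_nonneg _).trans (le_chebR ⟨f, hf⟩ hFc v hf)

lemma chebR_lip (hFne : F.Nonempty) (hFc : IsCompact F) (v w : X) :
    chebR v F ≤ chebR w F + ‖v - w‖ := by
  refine chebR_le hFne fun f hf => ?_
  calc ‖v - f‖ ≤ ‖v - w‖ + ‖w - f‖ := by
        have : v - f = (v - w) + (w - f) := by abel
        rw [this]; exact norm_add_le _ _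
    _ ≤ chebR w F + ‖v - w‖ := by
        have := le_chebR hFne hFc w hf
        linarith

end Cheb

section Main

variable {X : Type*} [NormedAddCommGroup X] [NormedSpace ℝ X]

/-- The quantitative improvement step. -/
lemma step (hX : IsL1Predual X) {J : Submodule ℝ X} (hJ : IsMIdeal J)
    {F : Set X} (hFne : F.Nonempty) (hFc : IsCompact F) {r : ℝ} (hr0 : 0 ≤ r)
    (hopt : ∀ η > (0:ℝ), ∃ u, u ∈ J ∧ ‖u‖ ≤ 1 ∧ chebR u F ≤ r + η)
    {x : X} (hxJ : x ∈ J) (hx1 : ‖x‖ ≤ 1) {ε : ℝ} (hε : 0 < ε) (hxr : chebR x F ≤ r + ε)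
    {v : X} (hvJ : v ∈ J) {δ : ℝ} (hδ : 0 < δ) (hv1 : ‖v‖ ≤ 1 + δ) (hvx : ‖v - x‖ ≤ ε + δ)
    (hvr : chebR v F ≤ r + δ) :
    ∀ σ > (0:ℝ), ∃ w, w ∈ J ∧ ‖w‖ ≤ 1 + σ ∧ ‖w - x‖ ≤ ε + σ ∧ ‖w - v‖ ≤ δ + σ ∧
      chebR w F ≤ r + σ := by
  intro σ hσ
  classical
  set η := σ / 3 with hηdef
  have hη : 0 < η := by rw [hηdef]; linarith
  obtain ⟨u, huJ, hu1, hur⟩ := hopt η hη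
  obtain ⟨t, htF, htfin, htcov⟩ := hFc.finite_cover_balls hη
  set s := htfin.toFinset with hsdef
  have hsF : ∀ f ∈ s, f ∈ F := by
    intro f hf
    exact htF (htfin.mem_toFinset.mp hf)
  have hscov : ∀ f ∈ F, ∃ g ∈ s, dist f g < η := by
    intro f hf
    obtain ⟨g, hg, hfg⟩ := Set.mem_iUnion₂.mp (htcov hf)
    exact ⟨g, htfin.mem_toFinset.mpr hg, mem_ball.mp hfg⟩
  -- ball system
  set ι := (Fin 3) ⊕ {f // f ∈ s} with hιdef
  set A : ι → X := Sum.elim ![0, x, v] (fun f => (f : X)) with hAdef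
  set B : ι → X := Sum.elim ![0, x, v] (fun _ => u) with hBdef
  set P : ι → ℝ := Sum.elim ![1, ε, δ] (fun _ => r + η) with hPdef
  have hρ : ∀ i, 0 ≤ P i := by
    rintro (i | f)
    · fin_cases i <;> simp [hPdef] <;> linarith
    · simp [hPdef]; linarith
  have hfu : ∀ (f : {f // f ∈ s}), ‖(f : X) - u‖ ≤ r + η := by
    intro f
    rw [norm_sub_rev]
    exact (le_chebR hFne hFc u (hsF f f.2)).trans hur
  have hxf : ∀ (f : {f // f ∈ s}), ‖x - (f : X)‖ ≤ r + ε :=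
    fun f => (le_chebR hFne hFc x (hsF f f.2)).trans hxr
  have hvf : ∀ (f : {f // f ∈ s}), ‖v - (f : X)‖ ≤ r + δ :=
    fun f => (le_chebR hFne hFc v (hsF f f.2)).trans hvr
  have hbJ : ∀ i, B i ∈ J := by
    rintro (i | f)
    · fin_cases i <;> simp [hBdef] <;> first | exact J.zero_mem | exact hxJ | exact hvJ
    · simp [hBdef]; exact huJ
  have hab : ∀ i, ‖A i - B i‖ ≤ P i := by
    rintro (i | f)
    · fin_cases i <;> simp [hAdef, hBdef, hPdef] <;> linarith
    · simp only [hAdef, hBdef, hPdef, Sum.elim_inr]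
      exact hfu f
  have hpair : ∀ i j, ‖A i - A j‖ ≤ P i + P j := by
    have h0x : ‖(0:X) - x‖ ≤ 1 + ε := by rw [zero_sub, norm_neg]; linarith
    have h0v : ‖(0:X) - v‖ ≤ 1 + δ := by rw [zero_sub, norm_neg]; linarith
    have hxv : ‖x - v‖ ≤ ε + δ := by rw [norm_sub_rev]; exact hvx
    have h0f : ∀ (f : {f // f ∈ s}), ‖(0:X) - (f : X)‖ ≤ 1 + (r + η) := by
      intro f
      rw [zero_sub, norm_neg]
      calc ‖(f : X)‖ = ‖((f : X) - u) + u‖ := by rw [sub_add_cancel]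
        _ ≤ ‖(f : X) - u‖ + ‖u‖ := norm_add_le _ _
        _ ≤ (r + η) + 1 := add_le_add (hfu f) hu1
        _ = 1 + (r + η) := by ring
    have hff : ∀ (f g : {f // f ∈ s}), ‖(f : X) - (g : X)‖ ≤ (r + η) + (r + η) := by
      intro f g
      calc ‖(f : X) - (g : X)‖ = ‖((f : X) - u) + (u - (g : X))‖ := by rw [sub_add_sub_cancel]
        _ ≤ ‖(f : X) - u‖ + ‖u - (g : X)‖ := norm_add_le _ _
        _ ≤ (r + η) + (r + η) := by
            refine add_le_add (hfu f) ?_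
            rw [norm_sub_rev]; exact hfu g
    have h0f' : ∀ (f : {f // f ∈ s}), ‖(f : X)‖ ≤ 1 + (r + η) := by
      intro f
      have := h0f f
      rw [zero_sub, norm_neg] at this
      exact this
    have hvx' : ‖x - v‖ ≤ ε + δ := by rw [norm_sub_rev]; exact hvx
    rintro (i | f) (j | g)
    · fin_cases i <;> fin_cases j <;> simp [hAdef, hPdef] <;> linarith
    · fin_cases i <;> simp [hAdef, hPdef]
      · linarith [h0f' g]
      · linarith [hxf g]
      · linarith [hvf g]
    · fin_cases j <;> simp [hAdef, hPdef]
      · linarith [h0f' f]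
      · rw [norm_sub_rev]; linarith [hxf f]
      · rw [norm_sub_rev]; linarith [hvf f]
    · simp only [hAdef, hPdef, Sum.elim_inr]
      exact hff f g
  obtain ⟨w, hwJ, hw⟩ := RAI hX hJ A B P hρ hpair hbJ hab hη
  have hw0 := hw (Sum.inl 0)
  have hw1 := hw (Sum.inl 1)
  have hw2 := hw (Sum.inl 2)
  simp only [hAdef, hPdef, Sum.elim_inl, Matrix.cons_val_zero, Matrix.cons_val_one,
    Matrix.head_cons, Matrix.cons_val_two, Matrix.tail_cons, sub_zero] at hw0 hw1 hw2
  refine ⟨w, hwJ, ?_, ?_, ?_, ?_⟩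
  · calc ‖w‖ ≤ 1 + η := hw0
      _ ≤ 1 + σ := by rw [hηdef]; linarith
  · calc ‖w - x‖ ≤ ε + η := hw1
      _ ≤ ε + σ := by rw [hηdef]; linarith
  · calc ‖w - v‖ ≤ δ + η := hw2
      _ ≤ δ + σ := by rw [hηdef]; linarith
  · refine chebR_le hFne fun f hf => ?_
    obtain ⟨g, hg, hfg⟩ := hscov f hf
    have hwg := hw (Sum.inr ⟨g, hg⟩)
    simp only [hAdef, hPdef, Sum.elim_inr] at hwg
    calc ‖w - f‖ ≤ ‖w - g‖ + ‖g - f‖ := by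
          have : w - f = (w - g) + (g - f) := by abel
          rw [this]; exact norm_add_le _ _
      _ ≤ ((r + η) + η) + η := by
          refine add_le_add hwg ?_
          rw [← dist_eq_norm, dist_comm]
          exact hfg.le
      _ = r + σ := by rw [hηdef]; ring

/-- Main approximation lemma: from an `ε`-almost center in `B_J` one can reach a true
restricted Chebyshev center within distance `ε`. -/
lemma approx [CompleteSpace X] (hX : IsL1Predual X) {J : Submodule ℝ X}
    (hJc : IsClosed (J : Set X)) (hJ : IsMIdeal J)
    {F : Set X} (hFne : F.Nonempty) (hFc : IsCompact F) :
    ∀ ε > (0:ℝ), ∀ x ∈ (J : Set X) ∩ closedBall 0 1,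
      chebR x F ≤ chebRad ((J : Set X) ∩ closedBall 0 1) F + ε →
      ∃ z ∈ chebCent ((J : Set X) ∩ closedBall 0 1) F, ‖x - z‖ ≤ ε := by
  intro ε hε x hxV hxr
  set V : Set X := (J : Set X) ∩ closedBall 0 1 with hVdef
  have h0V : (0 : X) ∈ V := ⟨J.zero_mem, mem_closedBall_self (by norm_num)⟩
  haveI : Nonempty V := ⟨⟨0, h0V⟩⟩
  set r : ℝ := chebRad V F with hrdef
  have hr0 : 0 ≤ r := le_ciInf fun v => chebR_nonneg hFne hFc _
  have hradle : ∀ u : V, r ≤ chebR (u : X) F := by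
    intro u
    refine ciInf_le ⟨0, ?_⟩ u
    rintro _ ⟨w, rfl⟩
    exact chebR_nonneg hFne hFc _
  have hopt : ∀ η > (0:ℝ), ∃ u, u ∈ J ∧ ‖u‖ ≤ 1 ∧ chebR u F ≤ r + η := by
    intro η hη
    have : chebRad V F < r + η := by rw [← hrdef]; linarith
    obtain ⟨u, hu⟩ := exists_lt_of_ciInf_lt this
    refine ⟨(u : X), u.2.1, ?_, hu.le⟩
    have := u.2.2
    rwa [mem_closedBall, dist_zero_right] at this
  obtain ⟨hxJ, hx1'⟩ := hxV
  have hx1 : ‖x‖ ≤ 1 := by rwa [mem_closedBall, dist_zero_right] at hx1'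
  -- the sequence of improvements
  set D : ℕ → ℝ := fun k => ε * (1/2)^k with hDdef
  have hD0 : ∀ k, 0 < D k := fun k => by positivity
  set Q : ℕ → X → Prop := fun k w =>
    w ∈ J ∧ ‖w‖ ≤ 1 + D k ∧ ‖w - x‖ ≤ ε + D k ∧ chebR w F ≤ r + D k with hQdef
  have hQ0 : Q 0 x := by
    refine ⟨hxJ, ?_, ?_, ?_⟩
    · simp only [hDdef, pow_zero, mul_one]; linarith
    · simp only [hDdef, pow_zero, mul_one, sub_self, norm_zero]; linarith
    · simp only [hDdef, pow_zero, mul_one]; exact hxr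
  have hind : ∀ k w, Q k w → ∃ w', Q (k+1) w' ∧ ‖w' - w‖ ≤ D k + D (k+1) := by
    intro k w hw
    obtain ⟨hwJ, hw1, hwx, hwr⟩ := hw
    obtain ⟨w', hw'J, hw'1, hw'x, hw'w, hw'r⟩ :=
      step hX hJ hFne hFc hr0 hopt hxJ hx1 hε hxr hwJ (hD0 k) hw1 hwx hwr
        (D (k+1)) (hD0 (k+1))
    exact ⟨w', ⟨hw'J, hw'1, hw'x, hw'r⟩, hw'w⟩
  choose! nxt hnxt1 hnxt2 using hind
  set v : ℕ → X := fun k => Nat.rec x (fun k w => nxt k w) k with hvdef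
  have hvsucc : ∀ k, v (k+1) = nxt k (v k) := fun k => rfl
  have hQv : ∀ k, Q k (v k) := by
    intro k
    induction k with
    | zero => exact hQ0
    | succ k ih => rw [hvsucc k]; exact hnxt1 k (v k) ih
  have hdist : ∀ k, ‖v (k+1) - v k‖ ≤ D k + D (k+1) := by
    intro k
    rw [hvsucc k]
    exact hnxt2 k (v k) (hQv k)
  have hcauchy : CauchySeq v := by
    refine cauchySeq_of_le_geometric (1/2) (2*ε) (by norm_num) fun n => ?_
    rw [dist_eq_norm, norm_sub_rev]
    calc ‖v (n+1) - v n‖ ≤ D n + D (n+1) := hdist n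
      _ ≤ 2 * ε * (1/2)^n := by
          simp only [hDdef, pow_succ]
          have h2 : (0:ℝ) < (1/2)^n := by positivity
          nlinarith
  obtain ⟨z, hz⟩ := cauchySeq_tendsto_of_complete hcauchy
  have hDlim : Filter.Tendsto D Filter.atTop (nhds 0) := by
    rw [hDdef]
    have := tendsto_pow_atTop_nhds_zero_of_lt_one (by norm_num : (0:ℝ) ≤ 1/2) (by norm_num)
    simpa using this.const_mul ε
  have hzJ : z ∈ J := hJc.mem_of_tendsto hz (Filter.Eventually.of_forall fun k => (hQv k).1)
  have hz1 : ‖z‖ ≤ 1 := by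
    have h1 : Filter.Tendsto (fun k => ‖v k‖) Filter.atTop (nhds ‖z‖) := hz.norm
    have h2 : Filter.Tendsto (fun k => 1 + D k) Filter.atTop (nhds 1) := by
      simpa using (tendsto_const_nhds.add hDlim)
    exact le_of_tendsto_of_tendsto' h1 h2 fun k => (hQv k).2.1
  have hzx : ‖z - x‖ ≤ ε := by
    have h1 : Filter.Tendsto (fun k => ‖v k - x‖) Filter.atTop (nhds ‖z - x‖) :=
      (hz.sub_const x).norm
    have h2 : Filter.Tendsto (fun k => ε + D k) Filter.atTop (nhds ε) := by
      simpa using (tendsto_const_nhds.add hDlim)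
    exact le_of_tendsto_of_tendsto' h1 h2 fun k => (hQv k).2.2.1
  have hzr : chebR z F ≤ r := by
    have hdzv : Filter.Tendsto (fun k => ‖z - v k‖) Filter.atTop (nhds 0) := by
      have := (hz.const_sub z).norm
      simpa using this
    have h2 : Filter.Tendsto (fun k => r + D k + ‖z - v k‖) Filter.atTop (nhds r) := by
      have h3 : Filter.Tendsto (fun k => r + D k + ‖z - v k‖) Filter.atTop (nhds (r + 0 + 0)) :=
        (((tendsto_const_nhds (x := r)).add hDlim).add hdzv)
      rw [add_zero, add_zero] at h3
      exact h3
    refine le_of_tendsto_of_tendsto' (tendsto_const_nhds) h2 fun k => ?_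
    calc chebR z F ≤ chebR (v k) F + ‖z - v k‖ := chebR_lip hFne hFc z (v k)
      _ ≤ r + D k + ‖z - v k‖ := by
          have := (hQv k).2.2.2
          linarith
  have hzV : z ∈ V := ⟨hzJ, by rwa [mem_closedBall, dist_zero_right]⟩
  refine ⟨z, ⟨hzV, ?_⟩, ?_⟩
  · exact hzr
  · rw [norm_sub_rev]; exact hzx

end Main

end Stmt12

end Stmt12Aux

/-- if `X` is an `L₁`-predual and `J` an `M`-ideal in `X`, then
`(X, B_J, K(X))` has property-(P₁). -/
theorem stmt_12 {X : Type*} [NormedAddCommGroup X] [NormedSpace ℝ X] [CompleteSpace X]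
    (hX : IsL1Predual X) (J : Submodule ℝ X) (hJc : IsClosed (J : Set X)) (hJ : IsMIdeal J) :
    ∀ F : Set X, F.Nonempty → IsCompact F →
      (chebCent ((J : Set X) ∩ closedBall 0 1) F).Nonempty ∧
      ∀ ε > (0 : ℝ), ∀ x ∈ (J : Set X) ∩ closedBall 0 1,
        chebR x F ≤ chebRad ((J : Set X) ∩ closedBall 0 1) F + ε →
        ∃ z ∈ chebCent ((J : Set X) ∩ closedBall 0 1) F, ‖x - z‖ ≤ ε := by
  intro F hFne hFc
  constructor
  · set V : Set X := (J : Set X) ∩ closedBall 0 1 with hVdef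
    have h0V : (0 : X) ∈ V := ⟨J.zero_mem, mem_closedBall_self (by norm_num)⟩
    haveI : Nonempty V := ⟨⟨0, h0V⟩⟩
    have hlt : chebRad V F < chebRad V F + 1 := lt_add_of_pos_right _ one_pos
    obtain ⟨u, hu⟩ := exists_lt_of_ciInf_lt hlt
    obtain ⟨z, hz, _⟩ := Stmt12.approx hX hJc hJ hFne hFc 1 one_pos (u : X) u.2 hu.le
    exact ⟨z, hz⟩
  · exact Stmt12.approx hX hJc hJ hFne hFc
end

section
/- Let S be a compact Hausdorff space, μ₁,…,μₙ norm-one regular Borel measures on S each with finite support, and Y = ⋂ᵢ ker(μᵢ) ⊆ C(S). Then for every nonempty compact F ⊆ C(S), the set of restricted Chebyshev centers cent_{B_Y}(F) is nonempty, and (C(S), B_Y, K(C(S))) has property-(P₁). -/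
open Metric Set Pointwise

private lemma finite_interp {S : Type*} [TopologicalSpace S] [CompactSpace S] [T2Space S]
    (A : Finset S) (t : S → ℝ) : ∃ h : C(S, ℝ), ∀ s ∈ A, h s = t s := by
  classical
  have key : ∀ s₀ ∈ A, ∃ φ : C(S, ℝ), φ s₀ = 1 ∧ ∀ s ∈ A, s ≠ s₀ → φ s = 0 := by
    intro s₀ _
    obtain ⟨φ, h0, h1, -⟩ := exists_continuous_zero_one_of_isClosed
      (Set.Finite.isClosed (A.erase s₀).finite_toSet) (isClosed_singleton (x := s₀))
      (Set.disjoint_singleton_right.mpr (by simp))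
    refine ⟨φ, h1 rfl, fun s hs hne => h0 ?_⟩
    simp [Finset.mem_erase, hne, hs]
  choose φ hφ1 hφ0 using key
  refine ⟨∑ s ∈ A.attach, t ↑s • φ ↑s s.2, ?_⟩
  intro s hs
  rw [ContinuousMap.coe_sum, Finset.sum_apply]
  rw [Finset.sum_eq_single (⟨s, hs⟩ : {x // x ∈ A})]
  · simp [hφ1 s hs]
  · intro b _ hb
    have hne : s ≠ (b : S) := fun h => hb (Subtype.ext h.symm)
    simp [hφ0 (↑b) b.2 s hs hne]
  · intro h; exact absurd (Finset.mem_attach _ _) h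

private lemma ecframe {S : Type*} [TopologicalSpace S] [CompactSpace S]
    {F : Set C(S, ℝ)} (hFc : IsCompact F) (s₀ : S) {ε : ℝ} (hε : 0 < ε) :
    ∀ᶠ s in nhds s₀, ∀ g ∈ F, |g s - g s₀| < ε := by
  obtain ⟨T, hTfin, hTsub⟩ := (totallyBounded_iff.mp hFc.totallyBounded) (ε/3) (by linarith)
  have h1 : ∀ᶠ s in nhds s₀, ∀ y ∈ T, |y s - y s₀| < ε/3 := by
    rw [Filter.eventually_all_finite hTfin]
    intro y _
    have := Metric.tendsto_nhds.mp (y.continuous.tendsto s₀) (ε/3) (by linarith)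
    simpa [Real.dist_eq] using this
  filter_upwards [h1] with s hs g hg
  obtain ⟨y, hyT, hgy⟩ := Set.mem_iUnion₂.mp (hTsub hg)
  have hd : dist g y < ε/3 := mem_ball.mp hgy
  have h2 : |g s - y s| < ε/3 := by
    have := ContinuousMap.dist_apply_le_dist (f := g) (g := y) s
    rw [Real.dist_eq] at this; linarith [lt_of_le_of_lt this hd]
  have h3 : |y s₀ - g s₀| < ε/3 := by
    have := ContinuousMap.dist_apply_le_dist (f := g) (g := y) s₀
    rw [Real.dist_eq, abs_sub_comm] at this; linarith [lt_of_le_of_lt this hd]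
  have h4 := hs y hyT
  calc |g s - g s₀| ≤ |g s - y s| + |y s - g s₀| := abs_sub_le _ _ _
    _ ≤ |g s - y s| + (|y s - y s₀| + |y s₀ - g s₀|) := by linarith [abs_sub_le (y s) (y s₀) (g s₀)]
    _ < ε/3 + (ε/3 + ε/3) := by linarith
    _ = ε := by ring

/-- for `Y = ⋂ᵢ ker μᵢ ⊆ C(S)` with each `μᵢ` a norm-one finitely supported
(discrete) measure, `cent_{B_Y}(F) ≠ ∅` for every nonempty compact `F`, and
`(C(S), B_Y, K(C(S)))` has property-(P₁).  Each `μᵢ` is encoded by a finitely supported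
function `c i : S →₀ ℝ` (a finite combination `∑ αⱼ δ_{sⱼ}` of Dirac measures), its norm
being `∑ |αⱼ|` and its action on `f` being `∑ αⱼ f(sⱼ)`. -/
theorem stmt_13 {S : Type*} [TopologicalSpace S] [CompactSpace S] [T2Space S]
    (n : ℕ) (c : Fin n → (S →₀ ℝ))
    (hnorm : ∀ i, ((c i).sum fun _ a => |a|) = 1)
    (Y : Set C(S, ℝ)) (hY : Y = {f : C(S, ℝ) | ∀ i, ((c i).sum fun s a => a * f s) = 0}) :
    ∀ F : Set C(S, ℝ), F.Nonempty → IsCompact F →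
      (chebCent (Y ∩ closedBall 0 1) F).Nonempty ∧
      ∀ ε > (0 : ℝ), ∃ δ > (0 : ℝ),
        chebCentA (Y ∩ closedBall 0 1) F δ
          ⊆ chebCent (Y ∩ closedBall 0 1) F + ε • closedBall (0 : C(S, ℝ)) 1 := by
  classical
  intro F hF hFc
  haveI : Nonempty F := hF.to_subtype
  -- uniform bound on F
  obtain ⟨M0, hM0⟩ := hFc.isBounded.subset_closedBall 0
  have hM0' : ∀ g ∈ F, ‖g‖ ≤ M0 := by
    intro g hg
    simpa [mem_closedBall, dist_zero_right] using hM0 hg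
  have hM : ∀ g ∈ F, ∀ s : S, |g s| ≤ M0 := by
    intro g hg s
    exact le_trans (ContinuousMap.norm_coe_le_norm g s) (hM0' g hg)
  -- envelopes
  set u : S → ℝ := fun s => ⨆ g : F, (g : C(S, ℝ)) s with hu
  set l : S → ℝ := fun s => ⨅ g : F, (g : C(S, ℝ)) s with hl
  have hbA : ∀ s, BddAbove (range fun g : F => (g : C(S, ℝ)) s) := by
    intro s; exact ⟨M0, by rintro x ⟨g, rfl⟩; exact (abs_le.mp (hM g g.2 s)).2⟩
  have hbB : ∀ s, BddBelow (range fun g : F => (g : C(S, ℝ)) s) := by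
    intro s; exact ⟨-M0, by rintro x ⟨g, rfl⟩; exact (abs_le.mp (hM g g.2 s)).1⟩
  have hgu : ∀ s, ∀ g ∈ F, g s ≤ u s := fun s g hg => le_ciSup (hbA s) ⟨g, hg⟩
  have hlg : ∀ s, ∀ g ∈ F, l s ≤ g s := fun s g hg => ciInf_le (hbB s) ⟨g, hg⟩
  have csup_le : ∀ {s : S} {b : ℝ}, (∀ g ∈ F, g s ≤ b) → u s ≤ b := by
    intro s b hb; exact ciSup_le fun g => hb g g.2
  have cinf_ge : ∀ {s : S} {b : ℝ}, (∀ g ∈ F, b ≤ g s) → b ≤ l s := by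
    intro s b hb; exact le_ciInf fun g => hb g g.2
  -- Lipschitz property of the envelopes and their continuity
  have env_lip : ∀ (s s₀ : S) (d : ℝ), (∀ g ∈ F, |g s - g s₀| ≤ d) →
      |u s - u s₀| ≤ d ∧ |l s - l s₀| ≤ d := by
    intro s s₀ d h
    have h' : ∀ g ∈ F, |g s₀ - g s| ≤ d := fun g hg => by
      rw [abs_sub_comm]; exact h g hg
    constructor
    · rw [abs_sub_le_iff]
      constructor
      · have h1 : u s ≤ u s₀ + d := csup_le fun g hg => by
          have := (abs_le.mp (h g hg)).2; have := hgu s₀ g hg; linarith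
        linarith
      · have h1 : u s₀ ≤ u s + d := csup_le fun g hg => by
          have := (abs_le.mp (h' g hg)).2; have := hgu s g hg; linarith
        linarith
    · rw [abs_sub_le_iff]
      constructor
      · have h1 : l s - d ≤ l s₀ := cinf_ge fun g hg => by
          have := (abs_le.mp (h g hg)).2; have := hlg s g hg; linarith
        linarith
      · have h1 : l s₀ - d ≤ l s := cinf_ge fun g hg => by
          have := (abs_le.mp (h' g hg)).2; have := hlg s₀ g hg; linarith
        linarith
  have hcu : Continuous u := by
    rw [continuous_iff_continuousAt]
    intro s₀
    rw [ContinuousAt, Metric.tendsto_nhds]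
    intro ε hε
    filter_upwards [ecframe hFc s₀ (half_pos hε)] with s hs
    rw [Real.dist_eq]
    exact lt_of_le_of_lt (env_lip s s₀ (ε/2) (fun g hg => (hs g hg).le)).1 (by linarith)
  have hcl : Continuous l := by
    rw [continuous_iff_continuousAt]
    intro s₀
    rw [ContinuousAt, Metric.tendsto_nhds]
    intro ε hε
    filter_upwards [ecframe hFc s₀ (half_pos hε)] with s hs
    rw [Real.dist_eq]
    exact lt_of_le_of_lt (env_lip s s₀ (ε/2) (fun g hg => (hs g hg).le)).2 (by linarith)
  -- the finite set of constraint points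
  set A : Finset S := Finset.univ.biUnion (fun i => (c i).support) with hA
  have hsuppA : ∀ i, (c i).support ⊆ A := fun i => by
    intro s hs; exact Finset.mem_biUnion.mpr ⟨i, Finset.mem_univ i, hs⟩
  have hLin : ∀ (i : Fin n) (f : S → ℝ),
      ((c i).sum fun s a => a * f s) = ∑ s ∈ A.attach, c i ↑s * f ↑s := by
    intro i f
    rw [Finsupp.sum]
    rw [Finset.sum_subset (hsuppA i)]
    · exact (Finset.sum_attach A fun s => c i s * f s).symm
    · intro s _ hs
      rw [Finsupp.notMem_support_iff.mp hs, zero_mul]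
  set V : Set C(S,ℝ) := Y ∩ closedBall 0 1 with hV
  have h0V : (0 : C(S,ℝ)) ∈ V := by
    constructor
    · rw [hY]
      intro i
      simp [Finsupp.sum]
    · exact mem_closedBall_self (by norm_num)
  haveI : Nonempty V := ⟨⟨0, h0V⟩⟩
  -- chebR basics
  have hbdd : ∀ v : C(S,ℝ), BddAbove (range fun g : F => ‖v - (g : C(S,ℝ))‖) := by
    intro v
    refine ⟨‖v‖ + M0, ?_⟩
    rintro x ⟨g, rfl⟩
    exact le_trans (norm_sub_le _ _) (by linarith [hM0' g g.2])
  have chebR_le : ∀ (v : C(S,ℝ)) (r : ℝ), chebR v F ≤ r ↔ ∀ g ∈ F, ‖v - g‖ ≤ r := by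
    intro v r
    constructor
    · intro h g hg
      exact le_trans (le_ciSup (hbdd v) ⟨g, hg⟩) h
    · intro h
      exact ciSup_le fun g => h g g.2
  have chebR_nonneg : ∀ v : C(S,ℝ), 0 ≤ chebR v F := by
    intro v
    obtain ⟨g, hg⟩ := hF
    exact le_trans (norm_nonneg (v - g)) (le_ciSup (hbdd v) ⟨g, hg⟩)
  set ρ : ℝ := chebRad V F with hρ
  have hρ0 : 0 ≤ ρ := le_ciInf fun v => chebR_nonneg v
  have norm_le_iff : ∀ (v g : C(S,ℝ)) (r : ℝ), 0 ≤ r →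
      (‖v - g‖ ≤ r ↔ ∀ s, |v s - g s| ≤ r) := by
    intro v g r hr
    rw [ContinuousMap.norm_le _ hr]
    simp [Real.norm_eq_abs]
  -- the fundamental pointwise characterization of membership
  have mem_iff : ∀ (f : C(S,ℝ)) (r : ℝ), 0 ≤ r →
      ((f ∈ V ∧ chebR f F ≤ r) ↔
        ((∀ i, ∑ s ∈ A.attach, c i ↑s * f ↑s = 0) ∧
          ∀ s, (u s - r ≤ f s ∧ f s ≤ l s + r) ∧ (-1 ≤ f s ∧ f s ≤ 1))) := by
    intro f r hr
    constructor
    · rintro ⟨⟨hfY, hfB⟩, hfr⟩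
      refine ⟨fun i => ?_, fun s => ⟨⟨?_, ?_⟩, ?_⟩⟩
      · rw [← hLin i f]
        exact (hY ▸ hfY) i
      · have h1 : u s ≤ f s + r := csup_le fun g hg => by
          have := (abs_le.mp (((norm_le_iff f g r hr).mp ((chebR_le f r).mp hfr g hg)) s)).1
          linarith
        linarith
      · have h1 : f s - r ≤ l s := cinf_ge fun g hg => by
          have := (abs_le.mp (((norm_le_iff f g r hr).mp ((chebR_le f r).mp hfr g hg)) s)).2
          linarith
        linarith
      · have h1 : ‖f‖ ≤ 1 := by simpa [mem_closedBall, dist_zero_right] using hfB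
        have := (ContinuousMap.norm_le _ (by norm_num : (0:ℝ) ≤ 1)).mp h1 s
        rw [Real.norm_eq_abs] at this
        exact abs_le.mp this
    · rintro ⟨hlin, hbound⟩
      refine ⟨⟨?_, ?_⟩, ?_⟩
      · rw [hY]
        intro i
        rw [hLin i f]
        exact hlin i
      · rw [mem_closedBall, dist_zero_right]
        rw [ContinuousMap.norm_le _ (by norm_num : (0:ℝ) ≤ 1)]
        intro s
        rw [Real.norm_eq_abs, abs_le]
        exact (hbound s).2
      · rw [chebR_le]
        intro g hg
        rw [norm_le_iff f g r hr]
        intro s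
        rw [abs_le]
        constructor
        · have := (hbound s).1.1; have := hgu s g hg; linarith
        · have := (hbound s).1.2; have := hlg s g hg; linarith
  -- the finite-dimensional constraint sets
  set K : ℝ → Set ({x // x ∈ A} → ℝ) := fun r =>
    {t | (∀ s : {x // x ∈ A}, (u ↑s - r ≤ t s ∧ t s ≤ l ↑s + r) ∧ (-1 ≤ t s ∧ t s ≤ 1)) ∧
      ∀ i, ∑ s ∈ A.attach, c i ↑s * t s = 0} with hK
  have Kmono : ∀ {r r' : ℝ}, r ≤ r' → K r ⊆ K r' := by
    intro r r' hrr' t ht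
    refine ⟨fun s => ⟨⟨?_, ?_⟩, (ht.1 s).2⟩, ht.2⟩
    · have := (ht.1 s).1.1; linarith
    · have := (ht.1 s).1.2; linarith
  have Kcube : ∀ (r : ℝ), K r ⊆ Set.pi univ (fun _ : {x // x ∈ A} => Icc (-1:ℝ) 1) := by
    intro r t ht
    rw [Set.mem_univ_pi]
    intro s
    exact ⟨(ht.1 s).2.1, (ht.1 s).2.2⟩
  have cube_cpt : IsCompact (Set.pi univ (fun _ : {x // x ∈ A} => Icc (-1:ℝ) 1)) :=
    isCompact_univ_pi fun _ => isCompact_Icc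
  -- limits of elements of K (ρ + aₖ) with aₖ → 0 lie in K ρ
  have Klimit : ∀ (a : ℕ → ℝ) (tk : ℕ → ({x // x ∈ A} → ℝ)) (t0 : {x // x ∈ A} → ℝ),
      Filter.Tendsto a Filter.atTop (nhds 0) → (∀ k, tk k ∈ K (ρ + a k)) →
      Filter.Tendsto tk Filter.atTop (nhds t0) → t0 ∈ K ρ := by
    intro a tk t0 ha hk ht
    have hcomp : ∀ s, Filter.Tendsto (fun k => tk k s) Filter.atTop (nhds (t0 s)) :=
      fun s => (tendsto_pi_nhds.mp ht) s
    constructor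
    · intro s
      refine ⟨⟨?_, ?_⟩, ?_, ?_⟩
      · have hL : Filter.Tendsto (fun k => u ↑s - (ρ + a k)) Filter.atTop (nhds (u ↑s - ρ)) := by
          have := (tendsto_const_nhds (x := ρ) (f := Filter.atTop (α := ℕ))).add ha
          simpa using (tendsto_const_nhds (x := u ↑s) (f := Filter.atTop (α := ℕ))).sub this
        exact le_of_tendsto_of_tendsto hL (hcomp s)
          (Filter.Eventually.of_forall fun k => (hk k).1 s |>.1.1)
      · have hL : Filter.Tendsto (fun k => l ↑s + (ρ + a k)) Filter.atTop (nhds (l ↑s + ρ)) := by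
          have := (tendsto_const_nhds (x := ρ) (f := Filter.atTop (α := ℕ))).add ha
          simpa using (tendsto_const_nhds (x := l ↑s) (f := Filter.atTop (α := ℕ))).add this
        exact le_of_tendsto_of_tendsto (hcomp s) hL
          (Filter.Eventually.of_forall fun k => (hk k).1 s |>.1.2)
      · exact ge_of_tendsto (hcomp s) (Filter.Eventually.of_forall fun k => (hk k).1 s |>.2.1)
      · exact le_of_tendsto (hcomp s) (Filter.Eventually.of_forall fun k => (hk k).1 s |>.2.2)
    · intro i
      have hsum : Filter.Tendsto (fun k => ∑ s ∈ A.attach, c i ↑s * tk k s) Filter.atTop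
          (nhds (∑ s ∈ A.attach, c i ↑s * t0 s)) := by
        refine tendsto_finset_sum _ fun s _ => ?_
        exact (hcomp s).const_mul _
      have hz : (fun k => ∑ s ∈ A.attach, c i ↑s * tk k s) = fun _ => (0:ℝ) :=
        funext fun k => (hk k).2 i
      rw [hz] at hsum
      exact (tendsto_nhds_unique tendsto_const_nhds hsum).symm
  -- approximate minimizers
  have approx : ∀ δ : ℝ, 0 < δ → ∃ v : C(S,ℝ), v ∈ V ∧ chebR v F ≤ ρ + δ := by
    intro δ hδ
    have h1 : (⨅ v : V, chebR (v : C(S,ℝ)) F) < ρ + δ := by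
      have : ρ < ρ + δ := by linarith
      exact this
    obtain ⟨v, hv⟩ := exists_lt_of_ciInf_lt h1
    exact ⟨v, v.2, hv.le⟩
  have hvk : ∀ k : ℕ, ∃ v : C(S,ℝ), v ∈ V ∧ chebR v F ≤ ρ + 1/((k:ℝ)+1) :=
    fun k => approx _ (by positivity)
  choose vk hvkV hvkr using hvk
  have hak : Filter.Tendsto (fun k : ℕ => 1/((k:ℝ)+1)) Filter.atTop (nhds 0) :=
    tendsto_one_div_add_atTop_nhds_zero_nat
  have hvk' : ∀ k, (∀ i, ∑ s ∈ A.attach, c i ↑s * vk k ↑s = 0) ∧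
      ∀ s, (u s - (ρ + 1/((k:ℝ)+1)) ≤ vk k s ∧ vk k s ≤ l s + (ρ + 1/((k:ℝ)+1))) ∧
        (-1 ≤ vk k s ∧ vk k s ≤ 1) :=
    fun k => (mem_iff (vk k) _ (by positivity)).mp ⟨hvkV k, hvkr k⟩
  -- the global inequality U_ρ ≤ L_ρ
  have hUL : ∀ s, max (u s - ρ) (-1) ≤ min (l s + ρ) 1 := by
    intro s
    have hL : Filter.Tendsto (fun k : ℕ => max (u s - (ρ + 1/((k:ℝ)+1))) (-1)) Filter.atTop
        (nhds (max (u s - ρ) (-1))) := by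
      have h1 : Filter.Tendsto (fun k : ℕ => u s - (ρ + 1/((k:ℝ)+1))) Filter.atTop
          (nhds (u s - ρ)) := by
        have := (tendsto_const_nhds (x := ρ) (f := Filter.atTop (α := ℕ))).add hak
        simpa using (tendsto_const_nhds (x := u s) (f := Filter.atTop (α := ℕ))).sub this
      simpa using h1.max tendsto_const_nhds
    have hR : Filter.Tendsto (fun k : ℕ => min (l s + (ρ + 1/((k:ℝ)+1))) 1) Filter.atTop
        (nhds (min (l s + ρ) 1)) := by
      have h1 : Filter.Tendsto (fun k : ℕ => l s + (ρ + 1/((k:ℝ)+1))) Filter.atTop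
          (nhds (l s + ρ)) := by
        have := (tendsto_const_nhds (x := ρ) (f := Filter.atTop (α := ℕ))).add hak
        simpa using (tendsto_const_nhds (x := l s) (f := Filter.atTop (α := ℕ))).add this
      simpa using h1.min tendsto_const_nhds
    refine le_of_tendsto_of_tendsto hL hR (Filter.Eventually.of_forall fun k => ?_)
    obtain ⟨-, hb⟩ := hvk' k
    obtain ⟨⟨hb1, hb2⟩, hb3, hb4⟩ := hb s
    exact le_trans (max_le hb1 hb3) (le_min hb2 hb4)
  -- K ρ is nonempty
  have hKρne : (K ρ).Nonempty := by
    set tk : ℕ → ({x // x ∈ A} → ℝ) := fun k s => vk k ↑s with htk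
    have htkK : ∀ k : ℕ, tk k ∈ K (ρ + 1/((k:ℝ)+1)) := by
      intro k
      obtain ⟨hc, hb⟩ := hvk' k
      exact ⟨fun s => hb ↑s, hc⟩
    obtain ⟨t0, -, φ, hφ, hconv⟩ := cube_cpt.tendsto_subseq (fun k => Kcube _ (htkK k))
    refine ⟨t0, Klimit (fun k => 1/((φ k : ℝ)+1)) (tk ∘ φ) t0
      (hak.comp hφ.tendsto_atTop) (fun k => htkK (φ k)) hconv⟩
  -- quantitative stability of the constraint sets
  have stab : ∀ ε : ℝ, 0 < ε → ∃ δ : ℝ, 0 < δ ∧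
      ∀ t ∈ K (ρ + δ), ∃ t' ∈ K ρ, ∀ s, |t s - t' s| ≤ ε := by
    intro ε hε
    by_contra hcon
    push_neg at hcon
    have hsel : ∀ k : ℕ, ∃ t, t ∈ K (ρ + 1/((k:ℝ)+1)) ∧
        ∀ t' ∈ K ρ, ∃ s, ε < |t s - t' s| := by
      intro k
      obtain ⟨t, ht, h2⟩ := hcon (1/((k:ℝ)+1)) (by positivity)
      exact ⟨t, ht, h2⟩
    choose tk htkK htk using hsel
    obtain ⟨t0, -, φ, hφ, hconv⟩ := cube_cpt.tendsto_subseq (fun k => Kcube _ (htkK k))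
    have ht0 : t0 ∈ K ρ := Klimit (fun k => 1/((φ k : ℝ)+1)) (tk ∘ φ) t0
      (hak.comp hφ.tendsto_atTop) (fun k => htkK (φ k)) hconv
    obtain ⟨k, hk⟩ := (Metric.tendsto_nhds.mp hconv ε hε).exists
    obtain ⟨s, hs⟩ := htk (φ k) t0 ht0
    have hlt : |tk (φ k) s - t0 s| < ε := by
      have := (dist_pi_lt_iff hε).mp hk s
      simpa [Real.dist_eq] using this
    linarith
  -- interpolation between continuous envelopes
  have interp : ∀ (U L : S → ℝ), Continuous U → Continuous L → (∀ s, U s ≤ L s) →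
      ∀ (t : S → ℝ), (∀ s ∈ A, U s ≤ t s ∧ t s ≤ L s) →
      ∃ f : C(S,ℝ), (∀ s, U s ≤ f s ∧ f s ≤ L s) ∧ ∀ s ∈ A, f s = t s := by
    intro U L hU hL hULs t ht
    obtain ⟨h, hh⟩ := finite_interp A t
    refine ⟨⟨fun s => max (U s) (min (L s) (h s)), ?_⟩, ?_, ?_⟩
    · exact hU.max (hL.min h.continuous)
    · intro s
      exact ⟨le_max_left _ _, max_le (hULs s) (min_le_left _ _)⟩
    · intro s hs
      show max (U s) (min (L s) (h s)) = t s
      rw [hh s hs, min_eq_right (ht s hs).2, max_eq_right (ht s hs).1]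
  -- construction of a center from an element of K ρ
  have build : ∀ (U L : S → ℝ), Continuous U → Continuous L →
      (∀ s, max (u s - ρ) (-1) ≤ U s) → (∀ s, L s ≤ min (l s + ρ) 1) →
      (∀ s, U s ≤ L s) → ∀ (t' : {x // x ∈ A} → ℝ), t' ∈ K ρ →
      (∀ s : {x // x ∈ A}, U ↑s ≤ t' s ∧ t' s ≤ L ↑s) →
      ∃ z : C(S,ℝ), z ∈ chebCent V F ∧ ∀ s, U s ≤ z s ∧ z s ≤ L s := by
    intro U L hUc hLc hUlo hLhi hULs t' ht'
    intro hbnd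
    set text : S → ℝ := fun s => if h : s ∈ A then t' ⟨s, h⟩ else 0 with htext
    have hbnd' : ∀ s ∈ A, U s ≤ text s ∧ text s ≤ L s := by
      intro s hs
      rw [htext]
      simp only [dif_pos hs]
      exact hbnd ⟨s, hs⟩
    obtain ⟨z, hz1, hz2⟩ := interp U L hUc hLc hULs text hbnd'
    have hzt : ∀ s : {x // x ∈ A}, z ↑s = t' s := by
      intro s
      rw [hz2 ↑s s.2, htext]
      simp only [dif_pos s.2]
    have hzmem : z ∈ V ∧ chebR z F ≤ ρ := by
      rw [mem_iff z ρ hρ0]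
      constructor
      · intro i
        rw [Finset.sum_congr rfl fun s _ => by rw [hzt s]]
        exact ht'.2 i
      · intro s
        have h1 := (hz1 s).1
        have h2 := (hz1 s).2
        have h3 := hUlo s
        have h4 := hLhi s
        refine ⟨⟨?_, ?_⟩, ?_, ?_⟩
        · have := le_max_left (u s - ρ) (-1); linarith
        · have := min_le_left (l s + ρ) 1; linarith
        · have := le_max_right (u s - ρ) (-1); linarith
        · have := min_le_right (l s + ρ) 1; linarith
    exact ⟨z, ⟨hzmem.1, hzmem.2⟩, hz1⟩
  constructor
  · -- nonemptiness of the set of restricted Chebyshev centers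
    obtain ⟨t0, ht0⟩ := hKρne
    have hbnd : ∀ s : {x // x ∈ A},
        max (u ↑s - ρ) (-1) ≤ t0 s ∧ t0 s ≤ min (l ↑s + ρ) 1 := by
      intro s
      obtain ⟨⟨h1, h2⟩, h3, h4⟩ := ht0.1 s
      exact ⟨max_le h1 h3, le_min h2 h4⟩
    obtain ⟨z, hz, -⟩ := build (fun s => max (u s - ρ) (-1)) (fun s => min (l s + ρ) 1)
      (((hcu.sub continuous_const).max continuous_const))
      (((hcl.add continuous_const).min continuous_const))
      (fun s => le_refl _) (fun s => le_refl _) hUL t0 ht0 hbnd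
    exact ⟨z, hz⟩
  · -- property (P₁)
    intro ε hε
    obtain ⟨δ₁, hδ₁, hstab⟩ := stab ε hε
    refine ⟨min δ₁ ε, lt_min hδ₁ hε, ?_⟩
    intro v hv
    set δ : ℝ := min δ₁ ε with hδdef
    have hδpos : 0 < δ := lt_min hδ₁ hε
    have hδε : δ ≤ ε := min_le_right _ _
    have hδδ₁ : δ ≤ δ₁ := min_le_left _ _
    obtain ⟨hvV, hvr⟩ := hv
    have hvmem := (mem_iff v (ρ + δ) (by linarith)).mp ⟨hvV, hvr⟩
    have htvK : (fun s : {x // x ∈ A} => v ↑s) ∈ K (ρ + δ) := ⟨fun s => hvmem.2 ↑s, hvmem.1⟩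
    obtain ⟨t', ht'K, ht'close⟩ := hstab _ (Kmono (by linarith) htvK)
    -- build the center z with ‖v - z‖ ≤ ε
    have hU'c : Continuous (fun s => max (max (u s - ρ) (-1)) (v s - ε)) :=
      ((hcu.sub continuous_const).max continuous_const).max (v.continuous.sub continuous_const)
    have hL'c : Continuous (fun s => min (min (l s + ρ) 1) (v s + ε)) :=
      ((hcl.add continuous_const).min continuous_const).min (v.continuous.add continuous_const)
    have hvbd := hvmem.2
    have hU'L' : ∀ s, max (max (u s - ρ) (-1)) (v s - ε) ≤ min (min (l s + ρ) 1) (v s + ε) := by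
      intro s
      obtain ⟨⟨hb1, hb2⟩, hb3, hb4⟩ := hvbd s
      refine max_le (le_min (hUL s) ?_) (le_min ?_ ?_)
      · refine max_le ?_ ?_
        · linarith
        · linarith
      · refine le_min ?_ ?_ <;> linarith
      · linarith
    have hbnd : ∀ s : {x // x ∈ A},
        max (max (u ↑s - ρ) (-1)) (v ↑s - ε) ≤ t' s ∧
          t' s ≤ min (min (l ↑s + ρ) 1) (v ↑s + ε) := by
      intro s
      obtain ⟨⟨h1, h2⟩, h3, h4⟩ := ht'K.1 s
      have h5 : -ε ≤ v ↑s - t' s ∧ v ↑s - t' s ≤ ε := abs_le.mp (ht'close s)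
      constructor
      · refine max_le (max_le h1 h3) ?_
        linarith [h5.1]
      · refine le_min (le_min h2 h4) ?_
        linarith [h5.2]
    obtain ⟨z, hzC, hzb⟩ := build _ _ hU'c hL'c
      (fun s => le_max_left _ _) (fun s => min_le_left _ _) hU'L' t' ht'K hbnd
    -- v = z + (v - z) with ‖v - z‖ ≤ ε
    have hvz : ‖v - z‖ ≤ ε := by
      rw [ContinuousMap.norm_le _ (le_of_lt hε)]
      intro s
      rw [ContinuousMap.sub_apply, Real.norm_eq_abs, abs_le]
      obtain ⟨hzb1, hzb2⟩ := hzb s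
      have := le_max_right (max (u s - ρ) (-1)) (v s - ε)
      have := min_le_right (min (l s + ρ) 1) (v s + ε)
      constructor <;> linarith
    refine Set.mem_add.mpr ⟨z, hzC, v - z, ?_, by abel⟩
    refine Set.mem_smul_set.mpr ⟨ε⁻¹ • (v - z), ?_, ?_⟩
    · have h2 : ‖ε⁻¹ • (v - z)‖ = ‖ε⁻¹‖ * ‖v - z‖ := norm_smul ε⁻¹ (v - z)
      refine mem_closedBall_zero_iff.mpr ?_
      rw [h2, Real.norm_eq_abs, abs_of_pos (inv_pos.mpr hε)]
      calc ε⁻¹ * ‖v - z‖ ≤ ε⁻¹ * ε := by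
            exact mul_le_mul_of_nonneg_left hvz (le_of_lt (inv_pos.mpr hε))
        _ = 1 := inv_mul_cancel₀ (ne_of_gt hε)
    · rw [smul_smul, mul_inv_cancel₀ (ne_of_gt hε), one_smul]
end

section
/- Let Y be a closed subspace of a Banach space X. Then Y has the 1½-ball property in X if and only if Y is proximinal in X and for every x ∈ X and every ε ≥ 0, P_Y(x,ε) = {y ∈ Y : d(y, P_Y(x)) ≤ ε}. -/
open Metric Set Pointwise

/-- The set of best approximations `P_Y(x)`. -/
noncomputable def metProj {X : Type*} [NormedAddCommGroup X] (V : Set X) (x : X) : Set X :=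
  {v ∈ V | ‖x - v‖ = Metric.infDist x V}

/-- The set of `ε`-near-best approximations `P_Y(x,ε)`. -/
noncomputable def metProjA {X : Type*} [NormedAddCommGroup X] (V : Set X) (x : X) (ε : ℝ) :
    Set X := {v ∈ V | ‖x - v‖ ≤ Metric.infDist x V + ε}

/-- `Y` has the 1½-ball property in `X`. -/
def OneAndHalfBall {X : Type*} [NormedAddCommGroup X] (V : Set X) : Prop :=
  ∀ y ∈ V, ∀ x : X, ∀ r₁ r₂ : ℝ, 0 < r₁ → 0 < r₂ → ‖x - y‖ < r₁ + r₂ →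
    (V ∩ closedBall x r₂).Nonempty → (V ∩ closedBall y r₁ ∩ closedBall x r₂).Nonempty

/-- Key construction: from the 1½-ball property, any `y ∈ Y` with `‖x - y‖ ≤ d + c`
is within `c + δ` of some best approximation. -/
lemma key_lemma {X : Type*} [NormedAddCommGroup X] [NormedSpace ℝ X] [CompleteSpace X]
    (Y : Submodule ℝ X) (hYc : IsClosed (Y : Set X)) (hB : OneAndHalfBall (Y : Set X))
    (x y : X) (hy : y ∈ (Y : Set X)) (c δ : ℝ) (hc : 0 < c) (hδ : 0 < δ)
    (hxy : ‖x - y‖ ≤ Metric.infDist x (Y : Set X) + c) :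
    ∃ p ∈ metProj (Y : Set X) x, ‖y - p‖ ≤ c + δ := by
  set d := Metric.infDist x (Y : Set X) with hd
  have hd0 : 0 ≤ d := Metric.infDist_nonneg
  have hYne : (Y : Set X).Nonempty := ⟨0, Y.zero_mem⟩
  have step : ∀ n : ℕ, ∀ z, z ∈ (Y : Set X) → ‖x - z‖ ≤ d + c * (1/2)^n →
      ∃ w, w ∈ (Y : Set X) ∧ ‖x - w‖ ≤ d + c * (1/2)^(n+1) ∧
        ‖w - z‖ ≤ (c + δ) * (1/2)^(n+1) := by
    intro n z hz hb
    have hpow : (0:ℝ) < (1/2:ℝ)^(n+1) := by positivity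
    have hr₂ : (0:ℝ) < d + c * (1/2)^(n+1) := by positivity
    have hr₁ : (0:ℝ) < (c + δ) * (1/2)^(n+1) := by positivity
    have hball : ((Y : Set X) ∩ closedBall x (d + c*(1/2)^(n+1))).Nonempty := by
      obtain ⟨w, hwY, hwd⟩ := (Metric.infDist_lt_iff hYne).mp
        (show d < d + c*(1/2)^(n+1) by nlinarith)
      exact ⟨w, hwY, by rw [mem_closedBall, dist_comm]; exact hwd.le⟩
    have hq : (1/2:ℝ)^n = 2*(1/2:ℝ)^(n+1) := by rw [pow_succ]; ring
    have hlt : ‖x - z‖ < (c+δ)*(1/2)^(n+1) + (d + c*(1/2)^(n+1)) := by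
      rw [hq] at hb; nlinarith
    obtain ⟨w, ⟨⟨hwY, hw1⟩, hw2⟩⟩ := hB z hz x _ _ hr₁ hr₂ hlt hball
    rw [mem_closedBall, dist_eq_norm] at hw1
    rw [mem_closedBall, dist_eq_norm] at hw2
    refine ⟨w, hwY, ?_, hw1⟩
    rwa [norm_sub_rev] at hw2
  choose! w hwY hwb hwd using step
  set f : ℕ → X := fun n => Nat.rec y (fun n z => w n z) n with hf
  have hf0 : f 0 = y := rfl
  have hfs : ∀ n, f (n+1) = w n (f n) := fun n => rfl
  have hinv : ∀ n, f n ∈ (Y : Set X) ∧ ‖x - f n‖ ≤ d + c * (1/2)^n := by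
    intro n
    induction n with
    | zero => exact ⟨hy, by simpa [hf0] using hxy⟩
    | succ n ih =>
        rw [hfs]
        exact ⟨hwY n _ ih.1 ih.2, hwb n _ ih.1 ih.2⟩
  have hstep : ∀ n, dist (f n) (f (n+1)) ≤ (c+δ)/2 * (1/2)^n := by
    intro n
    have h := hwd n (f n) (hinv n).1 (hinv n).2
    rw [dist_comm, dist_eq_norm, hfs]
    calc ‖w n (f n) - f n‖ ≤ (c + δ) * (1/2)^(n+1) := h
      _ = (c+δ)/2 * (1/2)^n := by rw [pow_succ]; ring
  have hsum : Summable (fun n : ℕ => (c+δ)/2 * (1/2:ℝ)^n) :=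
    summable_geometric_two.mul_left _
  have hcauchy := cauchySeq_of_dist_le_of_summable _ hstep hsum
  obtain ⟨p, hp⟩ := cauchySeq_tendsto_of_complete hcauchy
  have hpY : p ∈ (Y : Set X) :=
    hYc.mem_of_tendsto hp (Filter.Eventually.of_forall fun n => (hinv n).1)
  have hxp : ‖x - p‖ ≤ d := by
    have h1 : Filter.Tendsto (fun n => ‖x - f n‖) Filter.atTop (nhds ‖x - p‖) :=
      ((Filter.Tendsto.const_sub x hp).norm)
    have h2 : Filter.Tendsto (fun n : ℕ => d + c * (1/2:ℝ)^n) Filter.atTop (nhds d) := by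
      have := (tendsto_pow_atTop_nhds_zero_of_lt_one (by norm_num : (0:ℝ) ≤ 1/2)
        (by norm_num : (1/2:ℝ) < 1)).const_mul c
      simpa using (tendsto_const_nhds (x := d)).add this
    exact le_of_tendsto_of_tendsto' h1 h2 fun n => (hinv n).2
  have hpP : p ∈ metProj (Y : Set X) x := by
    refine ⟨hpY, le_antisymm hxp ?_⟩
    rw [← dist_eq_norm]
    exact Metric.infDist_le_dist_of_mem hpY
  refine ⟨p, hpP, ?_⟩
  have hdist : dist (f 0) p ≤ ∑' n, (c+δ)/2 * (1/2:ℝ)^n :=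
    dist_le_tsum_of_dist_le_of_tendsto₀ _ hstep hsum hp
  have htsum : ∑' n, (c+δ)/2 * (1/2:ℝ)^n = c + δ := by
    rw [tsum_mul_left, tsum_geometric_two]; ring
  rw [hf0, dist_eq_norm] at hdist
  rw [htsum] at hdist
  exact hdist

/-- `Y` has the 1½-ball property iff `Y` is proximinal and
`P_Y(x,ε) = {y ∈ Y : d(y,P_Y(x)) ≤ ε}` for all `x` and `ε ≥ 0`. -/
theorem stmt_17 {X : Type*} [NormedAddCommGroup X] [NormedSpace ℝ X] [CompleteSpace X]
    (Y : Submodule ℝ X) (hYc : IsClosed (Y : Set X)) :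
    OneAndHalfBall (Y : Set X) ↔
      ((∀ x : X, (metProj (Y : Set X) x).Nonempty) ∧
        ∀ x : X, ∀ ε : ℝ, 0 ≤ ε →
          metProjA (Y : Set X) x ε
            = {y ∈ (Y : Set X) | Metric.infDist y (metProj (Y : Set X) x) ≤ ε}) := by
  have hYne : (Y : Set X).Nonempty := ⟨0, Y.zero_mem⟩
  constructor
  · intro hB
    have hprox : ∀ x : X, (metProj (Y : Set X) x).Nonempty := by
      intro x
      obtain ⟨y, hyY, hyd⟩ := (Metric.infDist_lt_iff hYne).mp
        (lt_add_one (Metric.infDist x (Y : Set X)))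
      obtain ⟨p, hp, _⟩ := key_lemma Y hYc hB x y hyY 1 1 one_pos one_pos
        (by rw [← dist_eq_norm]; exact hyd.le)
      exact ⟨p, hp⟩
    refine ⟨hprox, fun x ε hε => ?_⟩
    ext y
    simp only [metProjA, mem_setOf_eq, mem_sep_iff]
    constructor
    · rintro ⟨hyY, hyb⟩
      refine ⟨hyY, le_of_forall_pos_le_add fun δ hδ => ?_⟩
      obtain ⟨p, hpP, hyp⟩ := key_lemma Y hYc hB x y hyY (ε + δ/2) (δ/2)
        (by linarith) (by linarith) (by linarith)
      calc Metric.infDist y (metProj (Y : Set X) x) ≤ dist y p :=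
            Metric.infDist_le_dist_of_mem hpP
        _ = ‖y - p‖ := dist_eq_norm _ _
        _ ≤ ε + δ := by linarith
    · rintro ⟨hyY, hyd⟩
      refine ⟨hyY, ?_⟩
      have : ∀ δ > (0:ℝ), ‖x - y‖ ≤ Metric.infDist x (Y : Set X) + ε + δ := by
        intro δ hδ
        obtain ⟨p, hpP, hyp⟩ := (Metric.infDist_lt_iff (hprox x)).mp
          (hyd.trans_lt (show ε < ε + δ by linarith))
        obtain ⟨hpY, hpd⟩ := hpP
        calc ‖x - y‖ = dist x y := (dist_eq_norm _ _).symm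
          _ ≤ dist x p + dist p y := dist_triangle _ _ _
          _ = ‖x - p‖ + dist y p := by rw [dist_eq_norm, dist_comm]
          _ ≤ Metric.infDist x (Y : Set X) + (ε + δ) := by rw [hpd]; linarith
          _ = Metric.infDist x (Y : Set X) + ε + δ := by ring
      have := le_of_forall_pos_le_add this
      linarith
  · rintro ⟨hprox, hform⟩
    rintro y hy x r₁ r₂ hr₁ hr₂ hlt ⟨z₀, hz₀Y, hz₀b⟩
    set d := Metric.infDist x (Y : Set X) with hd
    have hdr₂ : d ≤ r₂ := by
      calc d ≤ dist x z₀ := Metric.infDist_le_dist_of_mem hz₀Y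
        _ = dist z₀ x := dist_comm _ _
        _ ≤ r₂ := mem_closedBall.mp hz₀b
    by_cases hcase : ‖x - y‖ ≤ r₂
    · exact ⟨y, ⟨hy, by simpa using hr₁.le⟩,
        by rw [mem_closedBall, dist_eq_norm, norm_sub_rev]; exact hcase⟩
    · push_neg at hcase
      set a := ‖x - y‖ with ha
      have hda : d < a := lt_of_le_of_lt hdr₂ hcase
      set ε := a - d with hε'
      have hε : 0 ≤ ε := by simp [hε']; linarith
      have hyA : y ∈ metProjA (Y : Set X) x ε := ⟨hy, by simp [hε', ← hd]; exact ha.symm.le⟩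
      rw [hform x ε hε] at hyA
      obtain ⟨-, hyd⟩ := hyA
      have hη : 0 < (r₁ - (a - r₂))/2 := by simp [ha]; linarith
      set η := (r₁ - (a - r₂))/2 with hη'
      obtain ⟨p, hpP, hyp⟩ := (Metric.infDist_lt_iff (hprox x)).mp
        (hyd.trans_lt (show ε < ε + η by linarith))
      obtain ⟨hpY, hpd⟩ := hpP
      set t := (a - r₂)/(a - d) with ht'
      have hεpos : 0 < a - d := by linarith
      have ht0 : 0 < t := div_pos (by linarith) hεpos
      have ht1 : t ≤ 1 := by rw [ht', div_le_one hεpos]; linarith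
      have htε : t * (a - d) = a - r₂ := by
        rw [ht']; field_simp
      refine ⟨y + t • (p - y), ⟨?_, ?_⟩, ?_⟩
      · exact Y.add_mem hy (Y.smul_mem t (Y.sub_mem hpY hy))
      · rw [mem_closedBall, dist_eq_norm, add_sub_cancel_left, norm_smul,
          Real.norm_eq_abs, abs_of_pos ht0]
        have h1 : ‖p - y‖ < ε + η := by
          rw [← dist_eq_norm, dist_comm]; exact hyp
        have h2 : t * ‖p - y‖ ≤ t * (ε + η) :=
          mul_le_mul_of_nonneg_left h1.le ht0.le
        have h3 : t * (ε + η) = (a - r₂) + t * η := by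
          rw [hε']; nlinarith [htε]
        nlinarith [hη, ht1, ht0]
      · rw [mem_closedBall, dist_eq_norm]
        have hrw : y + t • (p - y) - x = -((1-t) • (x - y) + t • (x - p)) := by
          module
        rw [hrw, norm_neg]
        have hb : ‖(1-t) • (x - y) + t • (x - p)‖ ≤ (1-t) * a + t * d := by
          refine le_trans (norm_add_le _ _) ?_
          rw [norm_smul, norm_smul, Real.norm_eq_abs, Real.norm_eq_abs,
            abs_of_nonneg (by linarith), abs_of_pos ht0, hpd, ← hd, ← ha]
        have : (1-t) * a + t * d = r₂ := by nlinarith [htε]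
        linarith
end
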